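/- arXiv:2304.09250 — 7 statements merged into one kernel-verified Lean document; each statement's English description precedes it below -/
import Mathlib

section
/- Let p < q be primes. The k-th coefficient a_{pq}(k) of the cyclotomic polynomial Φ_{pq} equals 1 if k = up + vq for some u ∈ [0, p_q*-1] and v ∈ [0, q_p*-1]; equals -1 if k = up + vq - pq for some u ∈ [p_q*, q-1] and v ∈ [q_p*, p-1]; and equals 0 otherwise. -/
set_option maxHeartbeats 1000000


open Polynomial Finset

/-- If `p ∣ (v - v') * q` with `p, q` distinct primes and `v, v' < p`, then `v = v'`. -/
private lemma aux_v {p q : ℕ} (hp : p.Prime) (hq : q.Prime) (hne : p ≠ q)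
    {v v' : ℕ} (hv : v < p) (hv' : v' < p)
    (hdvd : (p : ℤ) ∣ ((v : ℤ) - v') * q) : v = v' := by
  have hpz : Prime (p : ℤ) := Nat.prime_iff_prime_int.mp hp
  rcases hpz.dvd_mul.mp hdvd with h | h
  · have : (v : ℤ) - v' = 0 := by
      refine Int.eq_zero_of_abs_lt_dvd h ?_
      rw [abs_sub_lt_iff]
      constructor <;> push_cast <;> omega
    omega
  · exfalso
    have : p ∣ q := Int.ofNat_dvd.mp (by exact_mod_cast h)
    exact hne ((Nat.prime_dvd_prime_iff_eq hp hq).mp this)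

private lemma aux_uniq {p q : ℕ} (hp : p.Prime) (hq : q.Prime) (hne : p ≠ q)
    {u u' v v' : ℕ} (hv : v < p) (hv' : v' < p)
    (h : (u : ℤ) * p + v * q = (u' : ℤ) * p + v' * q) : u = u' ∧ v = v' := by
  have hveq : v = v' := by
    refine aux_v hp hq hne hv hv' ⟨(u' : ℤ) - u, ?_⟩
    linear_combination h
  subst hveq
  have hp0 : (p : ℤ) ≠ 0 := by exact_mod_cast hp.pos.ne'
  have : (u : ℤ) = u' := mul_right_cancel₀ hp0 (by linarith : (u : ℤ) * p = (u' : ℤ) * p)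
  exact ⟨by exact_mod_cast this, rfl⟩

/-- Lam–Leung: the coefficients of `Φ_{pq}`. Here `a = p_q*` is the inverse of `p`
modulo `q` in `[1, q-1]` and `b = q_p*` is the inverse of `q` modulo `p` in `[1, p-1]`. -/
theorem stmt_1 (p q a b : ℕ) (hp : p.Prime) (hq : q.Prime) (hpq : p < q)
    (ha1 : 1 ≤ a) (ha2 : a ≤ q - 1) (ha : p * a ≡ 1 [MOD q])
    (hb1 : 1 ≤ b) (hb2 : b ≤ p - 1) (hb : q * b ≡ 1 [MOD p]) (k : ℕ) :
    ((∃ u v : ℕ, u ≤ a - 1 ∧ v ≤ b - 1 ∧ k = u * p + v * q) →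
        (cyclotomic (p * q) ℤ).coeff k = 1) ∧
    ((∃ u v : ℕ, a ≤ u ∧ u ≤ q - 1 ∧ b ≤ v ∧ v ≤ p - 1 ∧
        (k : ℤ) = u * p + v * q - p * q) →
        (cyclotomic (p * q) ℤ).coeff k = -1) ∧
    ((¬ (∃ u v : ℕ, u ≤ a - 1 ∧ v ≤ b - 1 ∧ k = u * p + v * q)) →
     (¬ (∃ u v : ℕ, a ≤ u ∧ u ≤ q - 1 ∧ b ≤ v ∧ v ≤ p - 1 ∧
        (k : ℤ) = u * p + v * q - p * q)) →
        (cyclotomic (p * q) ℤ).coeff k = 0) := by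
  have hp2 : 2 ≤ p := hp.two_le
  have hq2 : 2 ≤ q := hq.two_le
  have hne : p ≠ q := hpq.ne
  have haq : a < q := by omega
  have hbp : b < p := by omega
  have hco : Nat.Coprime p q := (Nat.coprime_primes hp hq).mpr hne
  -- the key numerical identity: p*a + q*b = p*q + 1
  have key : p * a + q * b = p * q + 1 := by
    have h1 : p * a + q * b ≡ 1 [MOD q] := by
      calc p * a + q * b ≡ 1 + q * b [MOD q] := Nat.ModEq.add_right _ ha
        _ ≡ 1 + 0 [MOD q] := Nat.ModEq.add_left _ ((Nat.modEq_zero_iff_dvd).mpr ⟨b, rfl⟩)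
        _ = 1 := by ring
    have h2 : p * a + q * b ≡ 1 [MOD p] := by
      calc p * a + q * b ≡ 0 + q * b [MOD p] :=
            Nat.ModEq.add_right _ ((Nat.modEq_zero_iff_dvd).mpr ⟨a, rfl⟩)
        _ ≡ 0 + 1 [MOD p] := Nat.ModEq.add_left _ hb
        _ = 1 := by ring
    have h3 : p * a + q * b ≡ 1 [MOD p * q] :=
      (Nat.modEq_and_modEq_iff_modEq_mul hco).mp ⟨h2, h1⟩
    have h4 : p * q ∣ (p * a + q * b) - 1 :=
      (Nat.modEq_iff_dvd' (by nlinarith)).mp h3.symm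
    obtain ⟨c, hc⟩ := h4
    have hub : p * a + q * b ≤ 2 * (p * q) - p - q := by
      have h5 : p * a ≤ p * (q - 1) := Nat.mul_le_mul_left _ ha2
      have h6 : q * b ≤ q * (p - 1) := Nat.mul_le_mul_left _ hb2
      have h7 : p * (q - 1) = p * q - p := by rw [Nat.mul_sub_one]
      have h8 : q * (p - 1) = q * p - q := by rw [Nat.mul_sub_one]
      have h9 : q * p = p * q := Nat.mul_comm _ _
      have h10 : p ≤ p * q := Nat.le_mul_of_pos_right _ (by omega)
      have h11 : q ≤ p * q := Nat.le_mul_of_pos_left _ (by omega)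
      omega
    have hpos : 2 ≤ p * a + q * b := by nlinarith
    have hc1 : c = 1 := by
      rcases c with _ | _ | c
      · omega
      · rfl
      · exfalso
        have h12 : p * q * 2 ≤ p * q * (c + 1 + 1) := Nat.mul_le_mul_left _ (by omega)
        omega
    rw [hc1, mul_one] at hc
    omega
  -- divisors of p*q
  have hdvd_char : ∀ x : ℕ, x ∣ p * q → x = 1 ∨ x = p ∨ x = q ∨ x = p * q := by
    intro x hx
    by_cases hpx : p ∣ x
    · obtain ⟨y, rfl⟩ := hpx
      have hy : y ∣ q := (mul_dvd_mul_iff_left (by omega : p ≠ 0)).mp hx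
      rcases hq.eq_one_or_self_of_dvd y hy with h | h <;> simp [h]
    · have hcx : Nat.Coprime p x := (Nat.Prime.coprime_iff_not_dvd hp).mpr hpx
      have hxq : x ∣ q := (Nat.Coprime.dvd_of_dvd_mul_left hcx.symm) hx
      rcases hq.eq_one_or_self_of_dvd x hxq with h | h <;> simp [h]
  have hsdiff : (p * q).divisors \ p.divisors = {q, p * q} := by
    ext x
    simp only [Finset.mem_sdiff, Nat.mem_divisors, hp.divisors, Finset.mem_insert,
      Finset.mem_singleton]
    constructor
    · rintro ⟨⟨hx, -⟩, hnx⟩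
      rcases hdvd_char x hx with rfl | rfl | rfl | rfl
      · exact absurd (Or.inl rfl) hnx
      · exact absurd (Or.inr rfl) hnx
      · exact Or.inl rfl
      · exact Or.inr rfl
    · rintro (rfl | rfl)
      · refine ⟨⟨Dvd.intro_left p rfl, by positivity⟩, ?_⟩
        rintro (h | h) <;> omega
      · refine ⟨⟨dvd_rfl, by positivity⟩, ?_⟩
        rintro (h | h) <;> nlinarith
  -- the polynomial identity (X^{pq}-1)(X-1) = (X^p-1)(X^q-1)Φ_{pq}
  haveI : Fact q.Prime := ⟨hq⟩
  have hId : ((X : ℤ[X]) ^ (p * q) - 1) * (X - 1) =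
      (X ^ p - 1) * (X ^ q - 1) * cyclotomic (p * q) ℤ := by
    have hmem : p ∈ (p * q).properDivisors := by
      rw [Nat.mem_properDivisors]
      exact ⟨Dvd.intro q rfl, by nlinarith⟩
    have h1 := X_pow_sub_one_mul_prod_cyclotomic_eq_X_pow_sub_one_of_dvd ℤ
      (Nat.mem_properDivisors.mp hmem).1 (Nat.mul_pos hp.pos hq.pos).ne'
    rw [hsdiff] at h1
    have hqne : q ≠ p * q := by nlinarith
    rw [Finset.prod_insert (by simpa using hqne), Finset.prod_singleton] at h1
    have h2 : cyclotomic q ℤ * (X - 1) = X ^ q - 1 := cyclotomic_prime_mul_X_sub_one ℤ q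
    calc ((X : ℤ[X]) ^ (p * q) - 1) * (X - 1)
        = (X ^ p - 1) * (cyclotomic q ℤ * cyclotomic (p * q) ℤ) * (X - 1) := by rw [h1]
      _ = (X ^ p - 1) * (cyclotomic q ℤ * (X - 1)) * cyclotomic (p * q) ℤ := by ring
      _ = (X ^ p - 1) * (X ^ q - 1) * cyclotomic (p * q) ℤ := by rw [h2]
  -- abbreviations
  set S1 : Finset (ℕ × ℕ) := (range a) ×ˢ (range b) with hS1
  set S2 : Finset (ℕ × ℕ) := (Ico a q) ×ˢ (Ico b p) with hS2
  set g1 : ℕ × ℕ → ℕ := fun uv => uv.1 * p + uv.2 * q with hg1def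
  set g2 : ℕ × ℕ → ℕ := fun uv => uv.1 * p + uv.2 * q - p * q with hg2def
  have hS2big : ∀ u v : ℕ, a ≤ u → b ≤ v → p * q + 1 ≤ u * p + v * q := by
    intro u v h5 h6
    have h7 : a * p ≤ u * p := Nat.mul_le_mul_right _ h5
    have h8 : b * q ≤ v * q := Nat.mul_le_mul_right _ h6
    have h10 : a * p = p * a := Nat.mul_comm a p
    have h11 : b * q = q * b := Nat.mul_comm b q
    omega
  -- the product identities
  have hprod1 : (∑ uv ∈ S1, (X : ℤ[X]) ^ g1 uv) =
      (∑ u ∈ range a, ((X : ℤ[X]) ^ p) ^ u) * (∑ v ∈ range b, ((X : ℤ[X]) ^ q) ^ v) := by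
    rw [Finset.sum_mul_sum, hS1, Finset.sum_product]
    refine Finset.sum_congr rfl fun u _ => Finset.sum_congr rfl fun v _ => ?_
    simp only [hg1def]
    rw [pow_add, pow_mul', pow_mul']
  have hprod2 : (∑ uv ∈ S2, (X : ℤ[X]) ^ g2 uv) * X ^ (p * q) =
      (∑ u ∈ Ico a q, ((X : ℤ[X]) ^ p) ^ u) * (∑ v ∈ Ico b p, ((X : ℤ[X]) ^ q) ^ v) := by
    rw [Finset.sum_mul_sum, Finset.sum_mul, hS2, Finset.sum_product]
    refine Finset.sum_congr rfl fun u hu => Finset.sum_congr rfl fun v hv => ?_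
    simp only [Finset.mem_Ico] at hu hv
    have hge := hS2big u v hu.1 hv.1
    simp only [hg2def]
    rw [← pow_add]
    have h5 : u * p + v * q - p * q + p * q = u * p + v * q := by omega
    rw [h5, pow_add, pow_mul', pow_mul']
  -- geometric sum identities
  have hgeo1 : (∑ u ∈ range a, ((X : ℤ[X]) ^ p) ^ u) * (X ^ p - 1) = X ^ (p * a) - 1 := by
    rw [geom_sum_mul, ← pow_mul]
  have hgeo2 : (∑ v ∈ range b, ((X : ℤ[X]) ^ q) ^ v) * (X ^ q - 1) = X ^ (q * b) - 1 := by
    rw [geom_sum_mul, ← pow_mul]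
  have hsplit1 : (∑ u ∈ Ico a q, ((X : ℤ[X]) ^ p) ^ u) =
      (∑ u ∈ range q, ((X : ℤ[X]) ^ p) ^ u) - (∑ u ∈ range a, ((X : ℤ[X]) ^ p) ^ u) := by
    have h := Finset.sum_range_add_sum_Ico (fun u => ((X : ℤ[X]) ^ p) ^ u) (le_of_lt haq)
    linear_combination h
  have hsplit2 : (∑ v ∈ Ico b p, ((X : ℤ[X]) ^ q) ^ v) =
      (∑ v ∈ range p, ((X : ℤ[X]) ^ q) ^ v) - (∑ v ∈ range b, ((X : ℤ[X]) ^ q) ^ v) := by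
    have h := Finset.sum_range_add_sum_Ico (fun v => ((X : ℤ[X]) ^ q) ^ v) (le_of_lt hbp)
    linear_combination h
  have hgeo3 : (∑ u ∈ Ico a q, ((X : ℤ[X]) ^ p) ^ u) * (X ^ p - 1) =
      X ^ (p * q) - X ^ (p * a) := by
    rw [hsplit1, sub_mul, geom_sum_mul, geom_sum_mul, ← pow_mul, ← pow_mul]
    ring
  have hgeo4 : (∑ v ∈ Ico b p, ((X : ℤ[X]) ^ q) ^ v) * (X ^ q - 1) =
      X ^ (p * q) - X ^ (q * b) := by
    rw [hsplit2, sub_mul, geom_sum_mul, geom_sum_mul, ← pow_mul, ← pow_mul,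
      Nat.mul_comm q p]
    ring
  have hAB : (X : ℤ[X]) ^ (p * a) * X ^ (q * b) = X ^ (p * q) * X := by
    rw [← pow_add, key, pow_succ]
  -- the main identity
  have hmain : ((∑ uv ∈ S1, (X : ℤ[X]) ^ g1 uv) - ∑ uv ∈ S2, (X : ℤ[X]) ^ g2 uv) *
      ((X ^ p - 1) * (X ^ q - 1)) * X ^ (p * q) =
      ((X ^ (p * q) - 1) * (X - 1)) * X ^ (p * q) := by
    have e1 : (∑ uv ∈ S1, (X : ℤ[X]) ^ g1 uv) * ((X ^ p - 1) * (X ^ q - 1)) =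
        (X ^ (p * a) - 1) * (X ^ (q * b) - 1) := by
      rw [hprod1, mul_mul_mul_comm, hgeo1, hgeo2]
    have e2 : (∑ uv ∈ S2, (X : ℤ[X]) ^ g2 uv) * ((X ^ p - 1) * (X ^ q - 1)) * X ^ (p * q) =
        (X ^ (p * q) - X ^ (p * a)) * (X ^ (p * q) - X ^ (q * b)) := by
      calc (∑ uv ∈ S2, (X : ℤ[X]) ^ g2 uv) * ((X ^ p - 1) * (X ^ q - 1)) * X ^ (p * q)
          = ((∑ uv ∈ S2, (X : ℤ[X]) ^ g2 uv) * X ^ (p * q)) * ((X ^ p - 1) * (X ^ q - 1)) := by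
            ring
        _ = (X ^ (p * q) - X ^ (p * a)) * (X ^ (p * q) - X ^ (q * b)) := by
            rw [hprod2, mul_mul_mul_comm, hgeo3, hgeo4]
    calc ((∑ uv ∈ S1, (X : ℤ[X]) ^ g1 uv) - ∑ uv ∈ S2, (X : ℤ[X]) ^ g2 uv) *
        ((X ^ p - 1) * (X ^ q - 1)) * X ^ (p * q)
        = ((∑ uv ∈ S1, (X : ℤ[X]) ^ g1 uv) * ((X ^ p - 1) * (X ^ q - 1))) * X ^ (p * q)
          - (∑ uv ∈ S2, (X : ℤ[X]) ^ g2 uv) * ((X ^ p - 1) * (X ^ q - 1)) * X ^ (p * q) := by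
          ring
      _ = (X ^ (p * a) - 1) * (X ^ (q * b) - 1) * X ^ (p * q)
          - (X ^ (p * q) - X ^ (p * a)) * (X ^ (p * q) - X ^ (q * b)) := by rw [e1, e2]
      _ = ((X ^ (p * q) - 1) * (X - 1)) * X ^ (p * q) := by
          linear_combination ((X : ℤ[X]) ^ (p * q) - 1) * hAB
  -- conclude the formula for the cyclotomic polynomial
  have hcyc : cyclotomic (p * q) ℤ =
      (∑ uv ∈ S1, (X : ℤ[X]) ^ g1 uv) - ∑ uv ∈ S2, (X : ℤ[X]) ^ g2 uv := by
    have h1 : ((X : ℤ[X]) ^ p - 1) ≠ 0 := by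
      have := X_pow_sub_C_ne_zero hp.pos (1 : ℤ)
      simpa using this
    have h2 : ((X : ℤ[X]) ^ q - 1) ≠ 0 := by
      have := X_pow_sub_C_ne_zero hq.pos (1 : ℤ)
      simpa using this
    have h3 : ((X : ℤ[X]) ^ (p * q)) ≠ 0 := pow_ne_zero _ X_ne_zero
    have hnz : (((X : ℤ[X]) ^ p - 1) * (X ^ q - 1) * X ^ (p * q)) ≠ 0 :=
      mul_ne_zero (mul_ne_zero h1 h2) h3
    symm
    apply mul_right_cancel₀ hnz
    linear_combination hmain + (X : ℤ[X]) ^ (p * q) * hId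
  -- coefficient extraction
  have hcoe : ∀ m : ℕ, (cyclotomic (p * q) ℤ).coeff m =
      (∑ uv ∈ S1, if m = g1 uv then (1 : ℤ) else 0)
      - (∑ uv ∈ S2, if m = g2 uv then (1 : ℤ) else 0) := by
    intro m
    rw [hcyc, coeff_sub, finset_sum_coeff, finset_sum_coeff]
    simp only [coeff_X_pow]
  refine ⟨?_, ?_, ?_⟩
  -- part 1
  · rintro ⟨u, v, hu, hv, rfl⟩
    have hua : u < a := by omega
    have hvb : v < b := by omega
    rw [hcoe]
    have hmem : (u, v) ∈ S1 := by
      simp [hS1, Finset.mem_product, hua, hvb]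
    have hsum1 : (∑ uv ∈ S1, if u * p + v * q = g1 uv then (1 : ℤ) else 0) = 1 := by
      rw [Finset.sum_eq_single_of_mem (u, v) hmem]
      · simp [hg1def]
      · rintro ⟨u', v'⟩ hj hne'
        simp only [hS1, Finset.mem_product, Finset.mem_range] at hj
        rw [if_neg]
        intro hEq
        simp only [hg1def] at hEq
        have hZ : (u : ℤ) * p + v * q = (u' : ℤ) * p + v' * q := by exact_mod_cast hEq
        obtain ⟨h5, h6⟩ := aux_uniq hp hq hne (by omega) (by omega) hZ
        exact hne' (by simp [Prod.ext_iff]; omega)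
    have hsum2 : (∑ uv ∈ S2, if u * p + v * q = g2 uv then (1 : ℤ) else 0) = 0 := by
      refine Finset.sum_eq_zero ?_
      rintro ⟨u', v'⟩ hj
      simp only [hS2, Finset.mem_product, Finset.mem_Ico] at hj
      rw [if_neg]
      intro hEq
      simp only [hg2def] at hEq
      have hge := hS2big u' v' hj.1.1 hj.2.1
      have hsub : p * q ≤ u' * p + v' * q := le_trans (Nat.le_succ _) hge
      have hZ : (u : ℤ) * p + v * q = (u' : ℤ) * p + v' * q - (p : ℤ) * q := by
        have := congrArg (fun n : ℕ => (n : ℤ)) hEq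
        rw [Nat.cast_sub hsub] at this
        push_cast at this ⊢
        linear_combination this
      have hv' : v = v' := by
        refine aux_v hp hq hne (by omega) (by omega) ⟨(u' : ℤ) - u - q, ?_⟩
        linear_combination hZ
      omega
    rw [hsum1, hsum2]
    norm_num
  -- part 2
  · rintro ⟨u, v, hau, huq, hbv, hvp, hk⟩
    have huq' : u < q := by omega
    have hvp' : v < p := by omega
    have hge := hS2big u v hau hbv
    have hsub : p * q ≤ u * p + v * q := le_trans (Nat.le_succ _) hge
    have hkval : k = u * p + v * q - p * q := by
      have : (k : ℤ) = ((u * p + v * q - p * q : ℕ) : ℤ) := by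
        rw [Nat.cast_sub hsub]
        push_cast
        linear_combination hk
      exact_mod_cast this
    subst hkval
    rw [hcoe]
    have hmem : (u, v) ∈ S2 := by
      simp [hS2, Finset.mem_product, Finset.mem_Ico]
      omega
    have hsum2 : (∑ uv ∈ S2, if u * p + v * q - p * q = g2 uv then (1 : ℤ) else 0) = 1 := by
      rw [Finset.sum_eq_single_of_mem (u, v) hmem]
      · simp [hg2def]
      · rintro ⟨u', v'⟩ hj hne'
        simp only [hS2, Finset.mem_product, Finset.mem_Ico] at hj
        rw [if_neg]
        intro hEq
        simp only [hg2def] at hEq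
        have hge' := hS2big u' v' hj.1.1 hj.2.1
        have hsub' : p * q ≤ u' * p + v' * q := le_trans (Nat.le_succ _) hge'
        have hnat : u * p + v * q = u' * p + v' * q := by omega
        have hZ : (u : ℤ) * p + v * q = (u' : ℤ) * p + v' * q := by exact_mod_cast hnat
        obtain ⟨h5, h6⟩ := aux_uniq hp hq hne (by omega) (by omega) hZ
        exact hne' (by simp [Prod.ext_iff]; omega)
    have hsum1 : (∑ uv ∈ S1, if u * p + v * q - p * q = g1 uv then (1 : ℤ) else 0) = 0 := by
      refine Finset.sum_eq_zero ?_
      rintro ⟨u', v'⟩ hj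
      simp only [hS1, Finset.mem_product, Finset.mem_range] at hj
      rw [if_neg]
      intro hEq
      simp only [hg1def] at hEq
      have hZ : (u' : ℤ) * p + v' * q = (u : ℤ) * p + v * q - (p : ℤ) * q := by
        have := congrArg (fun n : ℕ => (n : ℤ)) hEq
        rw [Nat.cast_sub hsub] at this
        push_cast at this ⊢
        linear_combination -this
      have hv' : v' = v := by
        refine aux_v hp hq hne (by omega) (by omega) ⟨(u : ℤ) - u' - q, ?_⟩
        linear_combination hZ
      omega
    rw [hsum1, hsum2]
    norm_num
  -- part 3
  · intro hnot1 hnot2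
    rw [hcoe]
    have hsum1 : (∑ uv ∈ S1, if k = g1 uv then (1 : ℤ) else 0) = 0 := by
      refine Finset.sum_eq_zero ?_
      rintro ⟨u', v'⟩ hj
      simp only [hS1, Finset.mem_product, Finset.mem_range] at hj
      rw [if_neg]
      intro hEq
      simp only [hg1def] at hEq
      exact hnot1 ⟨u', v', by omega, by omega, hEq⟩
    have hsum2 : (∑ uv ∈ S2, if k = g2 uv then (1 : ℤ) else 0) = 0 := by
      refine Finset.sum_eq_zero ?_
      rintro ⟨u', v'⟩ hj
      simp only [hS2, Finset.mem_product, Finset.mem_Ico] at hj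
      rw [if_neg]
      intro hEq
      simp only [hg2def] at hEq
      have hge := hS2big u' v' hj.1.1 hj.2.1
      have hsub : p * q ≤ u' * p + v' * q := le_trans (Nat.le_succ _) hge
      refine hnot2 ⟨u', v', hj.1.1, by omega, hj.2.1, by omega, ?_⟩
      have := congrArg (fun n : ℕ => (n : ℤ)) hEq
      rw [Nat.cast_sub hsub] at this
      push_cast at this ⊢
      linear_combination this
    rw [hsum1, hsum2]
    norm_num
end

section
/- If n has at most two distinct odd prime factors, then the height A(n) of the n-th cyclotomic polynomial equals 1. In particular, for distinct primes p < q, every coefficient of Φ_{pq} lies in {-1, 0, 1}. -/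
open Polynomial Finset

lemma divisors_mul_prime {p q : ℕ} (hp : p.Prime) (hq : q.Prime) :
    (p*q).divisors = {1, p, q, p*q} := by
  ext d
  simp only [Nat.mem_divisors, Finset.mem_insert, Finset.mem_singleton]
  constructor
  · rintro ⟨hd, -⟩
    rcases Nat.dvd_mul.mp hd with ⟨a, b, ha, hb, rfl⟩
    rcases (Nat.Prime.eq_one_or_self_of_dvd hp a ha) with rfl | rfl <;>
      rcases (Nat.Prime.eq_one_or_self_of_dvd hq b hb) with rfl | rfl <;> simp
  · have : p * q ≠ 0 := Nat.mul_ne_zero hp.pos.ne' hq.pos.ne'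
    rintro (rfl | rfl | rfl | rfl) <;>
      exact ⟨by first | exact one_dvd _ | exact Dvd.intro_left _ rfl | exact Dvd.intro _ rfl | exact dvd_refl _, this⟩

lemma cyclo_pq_mul {p q : ℕ} (hp : p.Prime) (hq : q.Prime) (hne : p ≠ q) :
    cyclotomic (p*q) ℤ * ((X^p - 1) * (X^q - 1)) = (X^(p*q) - 1) * (X - 1) := by
  haveI : Fact p.Prime := ⟨hp⟩
  haveI : Fact q.Prime := ⟨hq⟩
  have h1 : ∏ i ∈ (p*q).divisors, cyclotomic i ℤ = X^(p*q) - 1 :=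
    prod_cyclotomic_eq_X_pow_sub_one (Nat.mul_pos hp.pos hq.pos) ℤ
  rw [divisors_mul_prime hp hq] at h1
  have hqp1 : q ≠ 1 := hq.one_lt.ne'
  have hpq1 : p ≠ 1 := hp.one_lt.ne'
  have hppq : p ≠ p*q := by nlinarith [hq.one_lt, hp.pos]
  have hqpq : q ≠ p*q := by nlinarith [hp.one_lt, hq.pos]
  rw [Finset.prod_insert (by simp [hpq1.symm, hqp1.symm, (by nlinarith [hp.one_lt, hq.one_lt] : 1 ≠ p*q)]),
      Finset.prod_insert (by simp [hne, hppq, hpq1.symm]),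
      Finset.prod_insert (by simp [hqpq, hqp1.symm]), Finset.prod_singleton] at h1
  have hXp : (X:ℤ[X])^p - 1 = cyclotomic 1 ℤ * cyclotomic p ℤ := by
    have := prod_cyclotomic_eq_X_pow_sub_one hp.pos ℤ
    rw [hp.divisors, Finset.prod_insert (by simp [hpq1.symm]), Finset.prod_singleton] at this
    exact this.symm
  have hXq : (X:ℤ[X])^q - 1 = cyclotomic 1 ℤ * cyclotomic q ℤ := by
    have := prod_cyclotomic_eq_X_pow_sub_one hq.pos ℤ
    rw [hq.divisors, Finset.prod_insert (by simp [hqp1.symm]), Finset.prod_singleton] at this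
    exact this.symm
  rw [hXp, hXq, ← h1, cyclotomic_one]; ring


lemma exists_rs {p q : ℕ} (hp : p.Prime) (hq : q.Prime) (hne : p ≠ q) :
    ∃ r s : ℕ, 0 < r ∧ r < q ∧ 0 < s ∧ s < p ∧ r * p + s * q = p * q + 1 := by
  haveI : Fact q.Prime := ⟨hq⟩
  have hq1 : (1:ℕ) < q := hq.one_lt
  have hp1 : (1:ℕ) < p := hp.one_lt
  have hpq : ¬ (q ∣ p) := by
    intro h
    rcases (Nat.prime_dvd_prime_iff_eq hq hp).mp h with rfl
    exact hne rfl
  have hpu : (p : ZMod q) ≠ 0 := by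
    simpa [ZMod.natCast_eq_zero_iff] using hpq
  set r := ((p : ZMod q)⁻¹).val with hr
  have hrlt : r < q := ZMod.val_lt _
  have hrp : ((r * p : ℕ) : ZMod q) = 1 := by
    push_cast
    rw [hr, ZMod.natCast_val, ZMod.cast_id]
    exact inv_mul_cancel₀ hpu
  obtain ⟨k, hk⟩ := (ZMod.natCast_eq_iff q (r*p) 1).mp (by simpa using hrp)
  rw [ZMod.val_one q] at hk
  have hk' : r * p = 1 + q * k := by exact_mod_cast hk
  have hkp : k < p := by
    have h2 : r * p < q * p := by
      apply Nat.mul_lt_mul_of_lt_of_le hrlt (le_refl p) (by omega)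
    nlinarith
  have hk0 : 0 < k := by
    rcases Nat.eq_zero_or_pos k with h | h
    · subst h; simp at hk'; omega
    · exact h
  have hr0 : 0 < r := by
    rcases Nat.eq_zero_or_pos r with h | h
    · rw [h] at hk'; simp at hk'; omega
    · exact h
  refine ⟨r, p - k, hr0, hrlt, by omega, by omega, ?_⟩
  have hs : (p - k) * q = p * q - k * q := Nat.sub_mul _ _ _
  have hkq : k * q ≤ p * q := Nat.mul_le_mul_right _ (by omega)
  rw [mul_comm q k] at hk'
  omega

noncomputable def Pgeo (m c : ℕ) : ℤ[X] := ∑ i ∈ range m, X ^ (c * i)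

lemma Pgeo_mul (m c : ℕ) : Pgeo m c * (X ^ c - 1) = X ^ (c * m) - 1 := by
  have := geom_sum_mul (X ^ c : ℤ[X]) m
  simpa [Pgeo, ← pow_mul] using this

lemma key_identity (a b : ℕ) :
    ((X:ℤ[X]) ^ (a+1) - 1) * (X ^ (b+1) - 1) - X * ((X ^ b - 1) * (X ^ a - 1))
      = (X ^ (a+b+1) - 1) * (X - 1) := by
  ring

lemma coeff_Pgeo_mul (c d m n k : ℕ)
    (hinj : ∀ x ∈ range m ×ˢ range n, ∀ y ∈ range m ×ˢ range n,
      c*x.1 + d*x.2 = c*y.1 + d*y.2 → x = y) :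
    (Pgeo m c * Pgeo n d).coeff k = 0 ∨ (Pgeo m c * Pgeo n d).coeff k = 1 := by
  have hprod : Pgeo m c * Pgeo n d = ∑ x ∈ range m ×ˢ range n, X ^ (c*x.1 + d*x.2) := by
    rw [Pgeo, Pgeo, Finset.sum_mul_sum]
    rw [Finset.sum_product]
    simp [pow_add]
  have hco : (Pgeo m c * Pgeo n d).coeff k =
      (((range m ×ˢ range n).filter fun x => c*x.1 + d*x.2 = k).card : ℤ) := by
    rw [hprod, finset_sum_coeff]
    simp only [coeff_X_pow]
    rw [Finset.sum_boole]
    congr 1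
    apply Finset.card_nbij' id id <;> simp +contextual [eq_comm, Set.MapsTo, Set.LeftInvOn, Set.RightInvOn, Set.EqOn]
  have hcard : (((range m ×ˢ range n).filter fun x => c*x.1 + d*x.2 = k)).card ≤ 1 := by
    rw [Finset.card_le_one]
    intro a ha b hb
    simp only [Finset.mem_filter] at ha hb
    exact hinj a ha.1 b hb.1 (ha.2.trans hb.2.symm)
  rw [hco]
  interval_cases h : (((range m ×ˢ range n).filter fun x => c*x.1 + d*x.2 = k)).card <;> simp

lemma inj_aux {p q : ℕ} (hq : q.Prime) (hnd : ¬ q ∣ p) {i i' j j' : ℕ}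
    (hi : i < q) (hi' : i' < q) (h : p*i + q*j = p*i' + q*j') : i = i' ∧ j = j' := by
  haveI : Fact q.Prime := ⟨hq⟩
  have hz : ((p*i + q*j : ℕ) : ZMod q) = ((p*i' + q*j' : ℕ) : ZMod q) := by exact_mod_cast congrArg _ h
  push_cast at hz
  rw [ZMod.natCast_self] at hz
  simp only [zero_mul, add_zero] at hz
  have hpu : (p : ZMod q) ≠ 0 := by
    simpa [ZMod.natCast_eq_zero_iff] using hnd
  have hii : (i : ZMod q) = (i' : ZMod q) := mul_left_cancel₀ hpu hz
  have hieq : i = i' := by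
    have := congrArg ZMod.val hii
    rwa [ZMod.val_natCast_of_lt hi, ZMod.val_natCast_of_lt hi'] at this
  subst hieq
  refine ⟨rfl, ?_⟩
  have hq0 : 0 < q := hq.pos
  have : q * j = q * j' := by omega
  exact Nat.eq_of_mul_eq_mul_left hq0 this

lemma cyclotomic_pq_eq {p q : ℕ} (hp : p.Prime) (hq : q.Prime) (hne : p ≠ q)
    {r s : ℕ} (hr1 : 0 < r) (hrq : r < q) (hs1 : 0 < s) (hsp : s < p)
    (heq : r * p + s * q = p * q + 1) :
    cyclotomic (p*q) ℤ = Pgeo r p * Pgeo s q - X * (Pgeo (q-r) p * Pgeo (p-s) q) := by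
  set F : ℤ[X] := Pgeo r p * Pgeo s q - X * (Pgeo (q-r) p * Pgeo (p-s) q) with hF
  have hpq0 : 0 < p*q := Nat.mul_pos hp.pos hq.pos
  -- arithmetic bookkeeping
  obtain ⟨a, ha⟩ : ∃ a, p * r = a + 1 := ⟨p*r - 1, by have := Nat.mul_pos hp.pos hr1; omega⟩
  obtain ⟨b, hb⟩ : ∃ b, q * s = b + 1 := ⟨q*s - 1, by have := Nat.mul_pos hq.pos hs1; omega⟩
  have hab : p * q = a + b + 1 := by
    rw [mul_comm r p, mul_comm s q] at heq; omega
  have hqr : p * (q - r) = b := by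
    rw [Nat.mul_sub p q r, ha, hab]
    have : p * r ≤ p * q := Nat.mul_le_mul_left _ (le_of_lt hrq)
    omega
  have hps : q * (p - s) = a := by
    rw [Nat.mul_sub q p s, hb, mul_comm q p, hab]
    have : q * s ≤ q * p := Nat.mul_le_mul_left _ (le_of_lt hsp)
    rw [mul_comm q p, hab] at this
    omega
  have hFmul : F * ((X^p - 1) * (X^q - 1)) = (X^(p*q) - 1) * (X - 1) := by
    have expand : F * ((X^p - 1) * (X^q - 1)) =
        (Pgeo r p * (X^p - 1)) * (Pgeo s q * (X^q - 1)) -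
        X * ((Pgeo (q-r) p * (X^p - 1)) * (Pgeo (p-s) q * (X^q - 1))) := by
      rw [hF]; ring
    rw [expand, Pgeo_mul, Pgeo_mul, Pgeo_mul, Pgeo_mul, ha, hb, hqr, hps, hab]
    exact key_identity a b
  have hc := cyclo_pq_mul hp hq hne
  have hnz : ((X:ℤ[X])^p - 1) * (X^q - 1) ≠ 0 := by
    apply mul_ne_zero <;>
    · apply Polynomial.Monic.ne_zero
      simpa using monic_X_pow_sub_C (1:ℤ) (by first | exact hp.pos.ne' | exact hq.pos.ne')
  exact mul_right_cancel₀ hnz (hc.trans hFmul.symm)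

lemma cyclotomic_pq_flat {p q : ℕ} (hp : p.Prime) (hq : q.Prime) (hne : p ≠ q) (k : ℕ) :
    (cyclotomic (p * q) ℤ).coeff k ∈ ({-1, 0, 1} : Set ℤ) := by
  obtain ⟨r, s, hr1, hrq, hs1, hsp, heq⟩ := exists_rs hp hq hne
  rw [cyclotomic_pq_eq hp hq hne hr1 hrq hs1 hsp heq]
  have hnd : ¬ q ∣ p := fun h => hne ((Nat.prime_dvd_prime_iff_eq hq hp).mp h).symm
  have h1 : ∀ k', (Pgeo r p * Pgeo s q).coeff k' = 0 ∨ (Pgeo r p * Pgeo s q).coeff k' = 1 := by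
    intro k'
    apply coeff_Pgeo_mul
    rintro ⟨i, j⟩ hx ⟨i', j'⟩ hy hxy
    simp only [Finset.mem_product, Finset.mem_range] at hx hy
    obtain ⟨h1, h2⟩ := inj_aux hq hnd (lt_trans hx.1 hrq) (lt_trans hy.1 hrq) hxy
    exact Prod.ext h1 h2
  have h2 : ∀ k', (Pgeo (q-r) p * Pgeo (p-s) q).coeff k' = 0 ∨
      (Pgeo (q-r) p * Pgeo (p-s) q).coeff k' = 1 := by
    intro k'
    apply coeff_Pgeo_mul
    rintro ⟨i, j⟩ hx ⟨i', j'⟩ hy hxy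
    simp only [Finset.mem_product, Finset.mem_range] at hx hy
    have hqr : q - r ≤ q := Nat.sub_le _ _
    obtain ⟨h1', h2'⟩ := inj_aux hq hnd (lt_of_lt_of_le hx.1 hqr) (lt_of_lt_of_le hy.1 hqr) hxy
    exact Prod.ext h1' h2'
  rw [Polynomial.coeff_sub]
  rcases k with _ | m
  · have h0 : ((X:ℤ[X]) * (Pgeo (q-r) p * Pgeo (p-s) q)).coeff 0 = 0 := by
      simp [Polynomial.mul_coeff_zero]
    rw [h0, sub_zero]
    rcases h1 0 with h | h <;> simp [h]
  · rw [Polynomial.coeff_X_mul]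
    rcases h1 (m+1) with h | h <;> rcases h2 m with h' | h' <;> simp [h, h']
lemma coeff_comp_negX (f : ℤ[X]) (k : ℕ) : (f.comp (-X)).coeff k = (-1)^k * f.coeff k := by
  induction f using Polynomial.induction_on' with
  | add p q hp hq => simp [add_comp, hp, hq, mul_add]
  | monomial n a =>
    simp only [monomial_comp]
    rw [show (-X : ℤ[X]) = C (-1) * X by simp, mul_pow, ← C_pow,
      show C a * (C ((-1:ℤ)^n) * X^n) = C ((-1)^n * a) * X^n by rw [← mul_assoc, ← C_mul, mul_comm a],
      C_mul_X_pow_eq_monomial, coeff_monomial, coeff_monomial]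
    by_cases h : n = k <;> simp [h]

noncomputable def gcy (d : ℕ) : ℤ[X] := C ((-1:ℤ)^d.totient) * (cyclotomic d ℤ).comp (-X)

lemma divisors_two_mul {n : ℕ} (hn : Odd n) (h0 : 0 < n) :
    (2*n).divisors = n.divisors ∪ n.divisors.image (2 * ·) := by
  ext d
  simp only [Nat.mem_divisors, Finset.mem_union, Finset.mem_image]
  constructor
  · rintro ⟨hd, -⟩
    rcases Nat.even_or_odd d with he | ho
    · obtain ⟨e, rfl⟩ := he
      right
      refine ⟨e, ⟨?_, h0.ne'⟩, by ring⟩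
      have h2 : 2 * e ∣ 2 * n := by
        have : e + e = 2 * e := by ring
        rwa [this] at hd
      exact (mul_dvd_mul_iff_left (by norm_num : (2:ℕ) ≠ 0)).mp h2
    · left
      refine ⟨?_, h0.ne'⟩
      have hcop : Nat.Coprime d 2 := Odd.coprime_two_right ho
      exact (Nat.Coprime.dvd_of_dvd_mul_left hcop hd)
  · rintro (⟨hd, -⟩ | ⟨e, ⟨he, -⟩, rfl⟩)
    · exact ⟨hd.mul_left 2, by positivity⟩
    · exact ⟨mul_dvd_mul_left 2 he, by positivity⟩

lemma prod_cyclotomic_two_mul {n : ℕ} (hn : Odd n) (h0 : 0 < n) :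
    ∏ d ∈ n.divisors, cyclotomic (2*d) ℤ = X^n + 1 := by
  have h2n : ∏ i ∈ (2*n).divisors, cyclotomic i ℤ = X^(2*n) - 1 :=
    prod_cyclotomic_eq_X_pow_sub_one (by omega) ℤ
  rw [divisors_two_mul hn h0] at h2n
  have hdisj : Disjoint n.divisors (n.divisors.image (2 * ·)) := by
    rw [Finset.disjoint_left]
    rintro d hd hd2
    simp only [Finset.mem_image] at hd2
    obtain ⟨e, -, rfl⟩ := hd2
    have hdvd : (2*e) ∣ n := (Nat.mem_divisors.mp hd).1
    rcases hn with ⟨m, hm⟩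
    rcases hdvd with ⟨c, hc⟩
    have h2 : 2 ∣ n := ⟨e*c, by rw [hc]; ring⟩
    omega
  rw [Finset.prod_union hdisj, Finset.prod_image (by intro a _ b _ h; simp only at h; omega),
    prod_cyclotomic_eq_X_pow_sub_one h0 ℤ] at h2n
  have hnz : ((X:ℤ[X])^n - 1) ≠ 0 := by
    apply Polynomial.Monic.ne_zero
    simpa using monic_X_pow_sub_C (1:ℤ) h0.ne'
  apply mul_left_cancel₀ hnz
  rw [h2n, show 2*n = n+n by ring, pow_add]
  ring

lemma gcy_ne_zero (d : ℕ) : gcy d ≠ 0 := by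
  unfold gcy
  apply mul_ne_zero
  · simp only [ne_eq, C_eq_zero]
    positivity
  · intro h
    have := congrArg (fun f => Polynomial.comp f (-X)) h
    simp only [comp_neg_X_comp_neg_X, zero_comp] at this
    exact cyclotomic_ne_zero d ℤ this

lemma prod_gcy {n : ℕ} (hn : Odd n) (h0 : 0 < n) :
    ∏ d ∈ n.divisors, gcy d = X^n + 1 := by
  unfold gcy
  rw [Finset.prod_mul_distrib, ← Polynomial.prod_comp, ← map_prod (C : ℤ →+* ℤ[X]) _ _,
    prod_cyclotomic_eq_X_pow_sub_one h0 ℤ, Finset.prod_pow_eq_pow_sum,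
    Nat.sum_totient, Odd.neg_one_pow hn]
  rw [sub_comp, pow_comp, X_comp, one_comp, Odd.neg_pow hn]
  rw [map_neg, map_one]
  ring

lemma cyclotomic_two_mul_odd : ∀ n : ℕ, Odd n → 0 < n → cyclotomic (2*n) ℤ = gcy n := by
  intro n
  induction n using Nat.strong_induction_on with
  | _ n ih =>
    intro hn h0
    have hA := prod_cyclotomic_two_mul hn h0
    have hB := prod_gcy hn h0
    rw [← Nat.cons_self_properDivisors h0.ne', Finset.prod_cons] at hA hB
    have hprop : ∏ d ∈ n.properDivisors, cyclotomic (2*d) ℤ = ∏ d ∈ n.properDivisors, gcy d := by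
      apply Finset.prod_congr rfl
      intro d hd
      rw [Nat.mem_properDivisors] at hd
      have hd0 : 0 < d := Nat.pos_of_dvd_of_pos hd.1 h0
      have hdo : Odd d := by
        rcases Nat.even_or_odd d with he | ho
        · exfalso
          rcases he with ⟨e, he⟩
          rcases hd.1 with ⟨c, hc⟩
          rcases hn with ⟨m, hm⟩
          have : 2 ∣ n := ⟨e*c, by rw [hc, he]; ring⟩
          omega
        · exact ho
      exact ih d hd.2 hdo hd0
    rw [hprop] at hA
    have hne : ∏ d ∈ n.properDivisors, gcy d ≠ 0 :=
      Finset.prod_ne_zero_iff.mpr fun d _ => gcy_ne_zero d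
    exact mul_right_cancel₀ hne (hA.trans hB.symm)

lemma memS_iff (x : ℤ) : x ∈ ({-1, 0, 1} : Set ℤ) ↔ x.natAbs ≤ 1 := by
  simp only [Set.mem_insert_iff, Set.mem_singleton_iff]
  omega

lemma flat_prime {p : ℕ} (hp : p.Prime) (k : ℕ) :
    (cyclotomic p ℤ).coeff k ∈ ({-1, 0, 1} : Set ℤ) := by
  haveI : Fact p.Prime := ⟨hp⟩
  rw [cyclotomic_prime, finset_sum_coeff]
  simp only [coeff_X_pow]
  rw [Finset.sum_ite_eq (Finset.range p) k (fun _ => (1:ℤ))]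
  by_cases h : k ∈ Finset.range p <;> simp [h]

lemma flat_one (k : ℕ) : (cyclotomic 1 ℤ).coeff k ∈ ({-1, 0, 1} : Set ℤ) := by
  rw [cyclotomic_one]
  rcases k with _ | m
  · simp
  · rcases m with _ | m' <;> simp [coeff_X, coeff_sub, Polynomial.coeff_one]

lemma flat_two_mul {m : ℕ} (hm : Odd m) (h0 : 0 < m)
    (hf : ∀ k, (cyclotomic m ℤ).coeff k ∈ ({-1, 0, 1} : Set ℤ)) :
    ∀ k, (cyclotomic (2*m) ℤ).coeff k ∈ ({-1, 0, 1} : Set ℤ) := by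
  intro k
  rw [cyclotomic_two_mul_odd m hm h0]
  unfold gcy
  rw [coeff_C_mul, coeff_comp_negX, memS_iff]
  rw [Int.natAbs_mul, Int.natAbs_mul, Int.natAbs_pow, Int.natAbs_pow]
  simp only [Int.natAbs_neg, Int.natAbs_one, one_pow, one_mul]
  rw [← memS_iff]
  exact hf k

lemma flat_prod_primes {T : Finset ℕ} (hT : ∀ p ∈ T, p.Prime) (hcard : T.card ≤ 2) :
    ∀ k, (cyclotomic (∏ p ∈ T, p) ℤ).coeff k ∈ ({-1, 0, 1} : Set ℤ) := by
  interval_cases h : T.card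
  · rw [Finset.card_eq_zero] at h
    rw [h, Finset.prod_empty]
    exact flat_one
  · rw [Finset.card_eq_one] at h
    obtain ⟨p, hp⟩ := h
    have hpp : p.Prime := hT p (by rw [hp]; simp)
    rw [hp, Finset.prod_singleton]
    exact flat_prime hpp
  · rw [Finset.card_eq_two] at h
    obtain ⟨p, q, hne, hpq⟩ := h
    have hpp : p.Prime := hT p (by rw [hpq]; simp)
    have hqp : q.Prime := hT q (by rw [hpq]; simp)
    rw [hpq, Finset.prod_pair hne]
    exact cyclotomic_pq_flat hpp hqp hne

lemma flat_main : ∀ n : ℕ, 0 < n → (n.primeFactors.filter fun p => Odd p).card ≤ 2 →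
    ∀ k, (cyclotomic n ℤ).coeff k ∈ ({-1, 0, 1} : Set ℤ) := by
  intro n
  induction n using Nat.strong_induction_on with
  | _ n ih =>
    intro h0 hcard k
    by_cases hsq : Squarefree n
    · -- squarefree case
      have hprod : ∏ p ∈ n.primeFactors, p = n := Nat.prod_primeFactors_of_squarefree hsq
      set T := n.primeFactors.filter (fun p => Odd p) with hT
      have hsplit : (∏ p ∈ T, p) * (∏ p ∈ n.primeFactors.filter (fun p => ¬ Odd p), p) = n := by
        rw [hT]
        rw [Finset.prod_filter_mul_prod_filter_not]
        exact hprod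
      set m := ∏ p ∈ T, p with hm
      have hmodd : Odd m := by
        apply Finset.prod_induction _ Odd (fun a b ha hb => ha.mul hb) odd_one
        intro p hp
        exact (Finset.mem_filter.mp hp).2
      have hm0 : 0 < m := hmodd.pos
      have hE : n.primeFactors.filter (fun p => ¬ Odd p) ⊆ {2} := by
        intro p hp
        rw [Finset.mem_filter] at hp
        have hpp : p.Prime := Nat.prime_of_mem_primeFactors hp.1
        rw [Finset.mem_singleton]
        by_contra hne
        exact hp.2 (hpp.odd_of_ne_two hne)
      have hmflat : ∀ k, (cyclotomic m ℤ).coeff k ∈ ({-1, 0, 1} : Set ℤ) := by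
        apply flat_prod_primes
        · intro p hp
          exact Nat.prime_of_mem_primeFactors (Finset.mem_filter.mp hp).1
        · exact hcard
      rcases Finset.subset_singleton_iff.mp hE with hE0 | hE2
      · rw [hE0, Finset.prod_empty, mul_one] at hsplit
        rw [← hsplit]
        exact hmflat k
      · rw [hE2, Finset.prod_singleton] at hsplit
        rw [← hsplit, mul_comm m 2]
        exact flat_two_mul hmodd hm0 hmflat k
    · -- non-squarefree case
      rw [Nat.squarefree_iff_prime_squarefree] at hsq
      push_neg at hsq
      obtain ⟨p, hp, hdvd⟩ := hsq
      have hppos := hp.pos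
      set m := n / p with hmdef
      have hpn : p ∣ n := (dvd_mul_right p p).trans hdvd
      have hnm : n = m * p := by
        rw [hmdef, Nat.div_mul_cancel hpn]
      have hpm : p ∣ m := by
        rcases hdvd with ⟨c, hc⟩
        refine ⟨c, ?_⟩
        rw [hmdef, hc]
        rw [Nat.mul_assoc, mul_comm p (p*c), Nat.mul_div_cancel _ hppos]
      have hm0 : 0 < m := Nat.pos_of_ne_zero (by intro hz; rw [hz, zero_mul] at hnm; omega)
      have hmlt : m < n := by
        rw [hnm]
        have := hp.one_lt
        nlinarith
      have hcard' : (m.primeFactors.filter fun p => Odd p).card ≤ 2 := by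
        refine le_trans (Finset.card_le_card (Finset.filter_subset_filter _ ?_)) hcard
        exact Nat.primeFactors_mono ⟨p, hnm⟩ h0.ne'
      have hexp := cyclotomic_expand_eq_cyclotomic hp hpm ℤ
      rw [hnm, ← hexp, coeff_expand hppos]
      by_cases h : p ∣ k
      · simp only [h, if_true]
        exact ih m hmlt hm0 hcard' (k / p)
      · simp [h]

/-- The height of the `n`-th cyclotomic polynomial. -/
noncomputable def cycHeight (n : ℕ) : ℕ :=
  (cyclotomic n ℤ).support.sup fun k => ((cyclotomic n ℤ).coeff k).natAbs

/-- If `n` has at most two distinct odd prime factors, then `A(n) = 1`.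
In particular, for distinct primes `p < q`, every coefficient of `Φ_{pq}`
lies in `{-1, 0, 1}`. -/
theorem stmt_2 :
    (∀ n : ℕ, 0 < n → (n.primeFactors.filter fun p => Odd p).card ≤ 2 →
      cycHeight n = 1) ∧
    (∀ p q : ℕ, p.Prime → q.Prime → p < q → ∀ k : ℕ,
      (cyclotomic (p * q) ℤ).coeff k ∈ ({-1, 0, 1} : Set ℤ)) := by
  constructor
  · intro n h0 hcard
    have hf := flat_main n h0 hcard
    unfold cycHeight
    apply le_antisymm
    · apply Finset.sup_le
      intro k _
      exact (memS_iff _).mp (hf k)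
    · have hmono := cyclotomic.monic n ℤ
      have hne : (cyclotomic n ℤ).coeff (cyclotomic n ℤ).natDegree = 1 :=
        hmono.coeff_natDegree
      have hmem : (cyclotomic n ℤ).natDegree ∈ (cyclotomic n ℤ).support := by
        rw [Polynomial.mem_support_iff, hne]
        norm_num
      calc 1 = ((cyclotomic n ℤ).coeff (cyclotomic n ℤ).natDegree).natAbs := by
              rw [hne]; rfl
        _ ≤ _ := Finset.le_sup (f := fun k => ((cyclotomic n ℤ).coeff k).natAbs) hmem
  · intro p q hp hq hlt k
    exact cyclotomic_pq_flat hp hq hlt.ne k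
end

section
/- Let p < q < r be primes. Then Φ_{pqr}(x)·(x^{pq} - 1)·(x - 1) = Φ_{pq}(x^r)·(x^p - 1)·(x^q - 1) as polynomials. -/
open Polynomial

/-- For primes `p < q < r`,
`Φ_{pqr}(x)·(x^{pq} - 1)·(x - 1) = Φ_{pq}(x^r)·(x^p - 1)·(x^q - 1)`. -/
theorem stmt_5 (p q r : ℕ) (hp : p.Prime) (hq : q.Prime) (hr : r.Prime)
    (hpq : p < q) (hqr : q < r) :
    cyclotomic (p * q * r) ℤ * (X ^ (p * q) - 1) * (X - 1) =
      (cyclotomic (p * q) ℤ).comp (X ^ r) * (X ^ p - 1) * (X ^ q - 1) := by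
  have hpq' : p ≠ q := hpq.ne
  have hrdvd : ¬ r ∣ p * q := by
    intro h
    rcases (Nat.Prime.dvd_mul hr).mp h with h' | h'
    · exact absurd ((Nat.prime_dvd_prime_iff_eq hr hp).mp h') (by omega)
    · exact absurd ((Nat.prime_dvd_prime_iff_eq hr hq).mp h') (by omega)
  have hexp : (cyclotomic (p * q) ℤ).comp (X ^ r) =
      cyclotomic (p * q * r) ℤ * cyclotomic (p * q) ℤ := by
    rw [← expand_eq_comp_X_pow, cyclotomic_expand_eq_cyclotomic_mul hr hrdvd]
  -- divisors (p*q) \ divisors p = {q, p*q}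
  have hset : (p * q).divisors \ p.divisors = {q, p * q} := by
    ext m
    simp only [Finset.mem_sdiff, Nat.mem_divisors, Finset.mem_insert, Finset.mem_singleton]
    constructor
    · rintro ⟨⟨hm, hne⟩, hnot⟩
      rcases Nat.dvd_mul.mp hm with ⟨a, b, ha, hb, rfl⟩
      rcases (Nat.Prime.eq_one_or_self_of_dvd hp a ha) with rfl | rfl <;>
        rcases (Nat.Prime.eq_one_or_self_of_dvd hq b hb) with rfl | rfl
      · exact absurd ⟨one_dvd _, hp.ne_zero⟩ hnot
      · left; ring
      · exact absurd ⟨by simp, hp.ne_zero⟩ hnot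
      · right; rfl
    · have hpqne : p * q ≠ 0 := Nat.mul_ne_zero hp.ne_zero hq.ne_zero
      rintro (rfl | rfl)
      · refine ⟨⟨dvd_mul_left _ _, hpqne⟩, fun ⟨h, _⟩ => ?_⟩
        exact absurd ((Nat.prime_dvd_prime_iff_eq hq hp).mp h) (by omega)
      · refine ⟨⟨dvd_refl _, hpqne⟩, fun ⟨h, _⟩ => ?_⟩
        have := Nat.le_of_dvd hp.pos h
        nlinarith [hp.two_le, hq.two_le]
  have hmem : p ∈ (p * q).properDivisors := by
    rw [Nat.mem_properDivisors]
    exact ⟨dvd_mul_right _ _, lt_mul_of_one_lt_right hp.pos hq.one_lt⟩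
  have key := X_pow_sub_one_mul_prod_cyclotomic_eq_X_pow_sub_one_of_dvd ℤ (Nat.mem_properDivisors.mp hmem).1 (Nat.mul_ne_zero hp.ne_zero hq.ne_zero)
  rw [hset] at key
  have hqpq : q ≠ p * q := by nlinarith [hp.two_le, hq.two_le]
  rw [Finset.prod_pair hqpq] at key
  -- key : (X ^ p - 1) * (cyclotomic q ℤ * cyclotomic (p*q) ℤ) = X ^ (p*q) - 1
  have : Fact q.Prime := ⟨hq⟩
  have hq1 : cyclotomic q ℤ * (X - 1) = X ^ q - 1 := cyclotomic_prime_mul_X_sub_one ℤ q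
  rw [hexp, ← key, ← hq1]
  ring
end

section
/- Let p < q be primes and r a prime distinct from both. The union over u from 0 to q-1 of the sets {(up + vq)r + 1, ..., (up + vq)r + p} (for any fixed integer v) consists of pq distinct residues and forms a complete residue system modulo pq. -/
/-- For primes `p < q` and a prime `r` coprime to `pq`, and any fixed integer `v`,
the `pq` integers `(up + vq)r + t` with `0 ≤ u ≤ q-1`, `1 ≤ t ≤ p` are pairwise
incongruent modulo `pq` and form a complete residue system modulo `pq`. -/
theorem stmt_7 (p q r : ℕ) (hp : p.Prime) (hq : q.Prime) (hr : r.Prime)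
    (hpq : p < q) (hrp : r ≠ p) (hrq : r ≠ q) (v : ℤ) :
    (∀ u₁ u₂ t₁ t₂ : ℤ, 0 ≤ u₁ → u₁ ≤ q - 1 → 0 ≤ u₂ → u₂ ≤ q - 1 →
      1 ≤ t₁ → t₁ ≤ p → 1 ≤ t₂ → t₂ ≤ p →
      (u₁ * p + v * q) * r + t₁ ≡ (u₂ * p + v * q) * r + t₂ [ZMOD (p * q)] →
      u₁ = u₂ ∧ t₁ = t₂) ∧
    (∀ z : ℤ, ∃ u t : ℤ, 0 ≤ u ∧ u ≤ q - 1 ∧ 1 ≤ t ∧ t ≤ p ∧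
      z ≡ (u * p + v * q) * r + t [ZMOD (p * q)]) := by
  have hp0 : (0:ℤ) < p := by exact_mod_cast hp.pos
  have hq0 : (0:ℤ) < q := by exact_mod_cast hq.pos
  -- coprimality facts
  have hqp : ¬ (q:ℤ) ∣ (p:ℤ) := by
    rw [Int.natCast_dvd_natCast]
    exact fun h => absurd (Nat.le_of_dvd hp.pos h) (not_le.2 hpq)
  have hqr : ¬ (q:ℤ) ∣ (r:ℤ) := by
    rw [Int.natCast_dvd_natCast]
    intro h
    exact hrq ((Nat.prime_dvd_prime_iff_eq hq hr).1 h).symm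
  have hqprime : Prime (q:ℤ) := Nat.prime_iff_prime_int.1 hq
  constructor
  · intro u₁ u₂ t₁ t₂ hu₁0 hu₁ hu₂0 hu₂ ht₁1 ht₁ ht₂1 ht₂ h
    have hd : ((p:ℤ) * q) ∣ ((u₂ * p + v * q) * r + t₂ - ((u₁ * p + v * q) * r + t₁)) :=
      Int.ModEq.dvd h
    have hd' : ((p:ℤ) * q) ∣ ((u₂ - u₁) * p * r + (t₂ - t₁)) := by
      convert hd using 1; ring
    have hpd : (p:ℤ) ∣ ((u₂ - u₁) * p * r + (t₂ - t₁)) :=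
      dvd_trans (Dvd.intro _ rfl) hd'
    have hpt : (p:ℤ) ∣ (t₂ - t₁) := by
      have h6 : (p:ℤ) ∣ (u₂ - u₁) * p * r := ⟨(u₂ - u₁) * r, by ring⟩
      exact (dvd_add_right h6).mp hpd
    have ht : t₂ - t₁ = 0 := Int.eq_zero_of_abs_lt_dvd hpt (by rw [abs_lt]; omega)
    have hqd : (q:ℤ) ∣ ((u₂ - u₁) * p * r) := by
      have h7 := dvd_trans (Dvd.intro_left _ rfl : (q:ℤ) ∣ (p:ℤ) * q) hd'
      rw [ht, add_zero] at h7
      exact h7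
    have hqu : (q:ℤ) ∣ (u₂ - u₁) := by
      rcases (hqprime.dvd_mul.1 hqd) with h' | h'
      · rcases (hqprime.dvd_mul.1 h') with h'' | h''
        · exact h''
        · exact absurd h'' hqp
      · exact absurd h' hqr
    have hu : u₂ - u₁ = 0 := Int.eq_zero_of_abs_lt_dvd hqu (by rw [abs_lt]; omega)
    constructor <;> omega
  · intro z
    -- choose t
    set t : ℤ := (z - v * q * r - 1) % p + 1 with ht_def
    have ht1 : 1 ≤ t := by
      have := Int.emod_nonneg (z - v * q * r - 1) (ne_of_gt hp0)
      omega
    have htp : t ≤ p := by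
      have := Int.emod_lt_of_pos (z - v * q * r - 1) hp0
      omega
    have htmod : (p:ℤ) ∣ (z - v * q * r - t) := by
      have h1 := Int.emod_add_mul_ediv (z - v * q * r - 1) (p:ℤ)
      exact ⟨(z - v * q * r - 1) / p, by rw [ht_def]; linarith⟩
    -- choose u : need u * p * r ≡ z - t [ZMOD q]
    have hcop : IsCoprime ((p:ℤ) * r) (q:ℤ) := by
      rw [Int.isCoprime_iff_gcd_eq_one]
      have hc1 : Nat.Coprime (p * r) q :=
        Nat.Coprime.mul ((Nat.coprime_primes hp hq).2 (by omega))
          ((Nat.coprime_primes hr hq).2 hrq)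
      simpa [Int.gcd, Int.natAbs_mul] using hc1
    obtain ⟨a, b, hab⟩ := hcop
    -- a * (p*r) + b * q = 1
    set u : ℤ := (a * (z - t)) % q with hu_def
    have hu0 : 0 ≤ u := Int.emod_nonneg _ (ne_of_gt hq0)
    have huq : u ≤ q - 1 := by
      have := Int.emod_lt_of_pos (a * (z - t)) hq0
      omega
    refine ⟨u, t, hu0, huq, ht1, htp, ?_⟩
    have hqmod : (q:ℤ) ∣ (z - t - u * p * r) := by
      have h1 : (q:ℤ) ∣ (a * (z - t) - u) := by
        have h8 := Int.emod_add_mul_ediv (a * (z - t)) (q:ℤ)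
        exact ⟨a * (z - t) / q, by rw [hu_def]; linarith⟩
      -- z - t - u*p*r = (z-t)*(a*(p*r)+b*q) - u*p*r = (a*(z-t)-u)*p*r + (z-t)*b*q
      have key : z - t - u * p * r = (a * (z - t) - u) * (p * r) + (z - t) * b * q := by
        linear_combination (t - z) * hab
      rw [key]
      exact dvd_add (h1.mul_right _) ⟨(z - t) * b, by ring⟩
    -- combine via CRT
    have hcop' : Nat.Coprime ((p:ℤ)).natAbs ((q:ℤ)).natAbs := by
      simpa using (Nat.coprime_primes hp hq).2 (Nat.ne_of_lt hpq)
    have hmodp : z ≡ (u * p + v * q) * r + t [ZMOD (p:ℤ)] := by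
      have : (p:ℤ) ∣ ((u * p + v * q) * r + t - z) := by
        have h4 : (p:ℤ) ∣ (u * p * r) := ⟨u * r, by ring⟩
        have h5 : (u * p + v * q) * r + t - z = u * p * r - (z - v * q * r - t) := by ring
        rw [h5]
        exact dvd_sub h4 htmod
      exact (Int.modEq_iff_dvd.2 this)
    have hmodq : z ≡ (u * p + v * q) * r + t [ZMOD (q:ℤ)] := by
      have : (q:ℤ) ∣ ((u * p + v * q) * r + t - z) := by
        have h5 : (u * p + v * q) * r + t - z = v * q * r - (z - t - u * p * r) := by ring
        rw [h5]
        exact dvd_sub ⟨v * r, by ring⟩ hqmod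
      exact (Int.modEq_iff_dvd.2 this)
    have := (Int.modEq_and_modEq_iff_modEq_mul hcop').1 ⟨hmodp, hmodq⟩
    simpa using this
end

section
/- Let p < q < r be primes. For every nonnegative integer k, a_{pqr}(k) = Σ_{m ≥ m₀} a_{pq}(m)·χ_k(m), where m₀ is the smallest integer such that m₀r + p + q ≥ k + 1 + pq. -/
open Polynomial

/-- The coefficient `a_{pq}(m)` of `Φ_{pq}`, extended by `0` to all integer indices. -/
noncomputable def apq (p q : ℕ) (m : ℤ) : ℤ :=
  if 0 ≤ m then (cyclotomic (p * q) ℤ).coeff m.toNat else 0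

open Classical in
/-- The function `χ_k(m)` associated to primes `p < q < r`. -/
noncomputable def chi (p q r : ℕ) (k m : ℤ) : ℤ :=
  if ∃ s : ℤ, m * r + q < k + 1 + s * p * q ∧ k + 1 + s * p * q ≤ m * r + q + p then 1
  else if ∃ s : ℤ, m * r < k + 1 + s * p * q ∧ k + 1 + s * p * q ≤ m * r + p then -1
  else 0

namespace ZZAux

open Finset

noncomputable def zc (P : Polynomial ℤ) (n : ℤ) : ℤ :=
  if 0 ≤ n then P.coeff n.toNat else 0

lemma zc_natCast (P : Polynomial ℤ) (n : ℕ) : zc P n = P.coeff n := by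
  simp [zc]

lemma zc_add (P Q : Polynomial ℤ) (n : ℤ) : zc (P + Q) n = zc P n + zc Q n := by
  unfold zc; split <;> simp

lemma zc_sub (P Q : Polynomial ℤ) (n : ℤ) : zc (P - Q) n = zc P n - zc Q n := by
  unfold zc; split <;> simp

lemma zc_mul_X_pow (P : Polynomial ℤ) (j : ℕ) (n : ℤ) :
    zc (P * X ^ j) n = zc P (n - j) := by
  unfold zc
  rcases le_or_gt 0 n with h | h
  · rw [if_pos h, coeff_mul_X_pow']
    rcases le_or_gt (j : ℤ) n with hj | hj
    · rw [if_pos (by omega), if_pos (by omega)]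
      congr 1; omega
    · rw [if_neg (by omega), if_neg (by omega)]
  · rw [if_neg (by omega), if_neg (by omega)]

lemma zc_C_mul (c : ℤ) (P : Polynomial ℤ) (n : ℤ) : zc (C c * P) n = c * zc P n := by
  unfold zc; split <;> simp

lemma zc_sum {ι : Type*} (s : Finset ι) (f : ι → Polynomial ℤ) (n : ℤ) :
    zc (∑ i ∈ s, f i) n = ∑ i ∈ s, zc (f i) n := by
  unfold zc; split <;> simp [finset_sum_coeff]

lemma zc_X_pow (j : ℕ) (n : ℤ) : zc ((X : Polynomial ℤ) ^ j) n = if n = j then 1 else 0 := by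
  unfold zc
  rcases le_or_gt 0 n with h | h
  · rw [if_pos h, coeff_X_pow]
    split_ifs <;> omega
  · rw [if_neg (by omega), if_neg (by omega)]

lemma zc_one (n : ℤ) : zc (1 : Polynomial ℤ) n = if n = 0 then 1 else 0 := by
  have := zc_X_pow 0 n
  simpa using this

lemma zc_zero_of_lt (P : Polynomial ℤ) (n : ℤ) (h : (P.natDegree : ℤ) < n) : zc P n = 0 := by
  unfold zc
  rw [if_pos (by omega)]
  exact coeff_eq_zero_of_natDegree_lt (by omega)

lemma sum_ind_range (T : ℕ) (z : ℤ) :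
    (∑ i ∈ Finset.range T, if (i : ℤ) = z then (1:ℤ) else 0) = if 0 ≤ z ∧ z < T then 1 else 0 := by
  induction T with
  | zero => simp
  | succ t ih =>
    rw [Finset.sum_range_succ, ih]
    split_ifs <;> push_cast at * <;> omega

lemma sum_geo (S : ℕ) (c w : ℤ) (hc : 0 < c) :
    (∑ s ∈ Finset.range S, if ((s : ℤ) + 1) * c ≤ w then (1:ℤ) else 0)
      = max 0 (min (S : ℤ) (w / c)) := by
  induction S with
  | zero => simp
  | succ S ih =>
    rw [Finset.sum_range_succ, ih]
    have h1 : (((S:ℤ)) + 1) * c ≤ w ↔ ((S:ℤ)) + 1 ≤ w / c := (Int.le_ediv_iff_mul_le hc).symm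
    rw [show (if ((S:ℤ) + 1) * c ≤ w then (1:ℤ) else 0) = if (S:ℤ) + 1 ≤ w / c then 1 else 0 from by
      rw [if_congr h1 rfl rfl]]
    have h2 : (((S:ℕ)+1 : ℕ) : ℤ) = (S:ℤ) + 1 := by push_cast; ring
    rw [h2]
    split_ifs with h <;> omega

open Classical in
lemma floor_diff (c z a : ℤ) (hc : 0 < c) (ha0 : 0 ≤ a) (hac : a ≤ c) :
    (z + a) / c - z / c = if ∃ s : ℤ, z < s * c ∧ s * c ≤ z + a then 1 else 0 := by
  have h1 : z / c ≤ (z + a) / c := Int.ediv_le_ediv hc (by omega)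
  have h2 : (z + a) / c ≤ (z + c) / c := Int.ediv_le_ediv hc (by omega)
  have h3 : (z + c) / c = z / c + 1 := by
    rw [show z + c = z + 1 * c from by ring, Int.add_mul_ediv_right _ _ (by omega)]
  split_ifs with h
  · obtain ⟨s, hs1, hs2⟩ := h
    have hs3 : s ≤ (z + a) / c := (Int.le_ediv_iff_mul_le hc).mpr hs2
    have hs4 : z / c < s := by
      rw [Int.ediv_lt_iff_lt_mul hc]; exact hs1
    omega
  · push_neg at h
    by_contra hne
    have hlt : z / c < (z + a) / c := by omega
    have hs1 : z < ((z + a) / c) * c := (Int.ediv_lt_iff_lt_mul hc).mp hlt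
    have hs2 : ((z + a) / c) * c ≤ z + a := Int.ediv_mul_le _ (by omega)
    have := h _ hs1; omega

lemma cnt_eval (Kd S : ℕ) (c w : ℤ) (hc : 0 < c) (hbound : w - c < (Kd : ℤ)) :
    (∑ i ∈ Finset.range Kd, ∑ s ∈ Finset.range S,
        if (i : ℤ) + ((s : ℤ) + 1) * c = w then (1:ℤ) else 0)
      = max 0 (min (S : ℤ) (w / c)) := by
  rw [Finset.sum_comm]
  have step : ∀ s ∈ Finset.range S,
      (∑ i ∈ Finset.range Kd, if (i : ℤ) + ((s : ℤ) + 1) * c = w then (1:ℤ) else 0)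
        = if ((s : ℤ) + 1) * c ≤ w then 1 else 0 := by
    intro s _
    have h1 : ∀ i : ℕ, ((i : ℤ) + ((s : ℤ) + 1) * c = w) ↔ ((i : ℤ) = w - ((s : ℤ) + 1) * c) := by
      intro i; constructor <;> intro h <;> linarith
    rw [Finset.sum_congr rfl fun i _ => if_congr (h1 i) rfl rfl, sum_ind_range]
    have hcs : c ≤ ((s : ℤ) + 1) * c := by nlinarith [Int.ofNat_nonneg s]
    split_ifs <;> omega
  rw [Finset.sum_congr rfl step, sum_geo _ _ _ hc]

noncomputable def ee (p q : ℕ) (x : ℤ) : ℤ :=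
  (if x = (p:ℤ)+q then 1 else 0) - (if x = (p:ℤ) then 1 else 0)
    - (if x = (q:ℤ) then 1 else 0) + (if x = 0 then 1 else 0)

lemma zz_poly (p q r : ℕ) (hp : p.Prime) (hq : q.Prime) (hr : r.Prime)
    (hpq : p < q) (hqr : q < r) :
    (cyclotomic (p*q*r) ℤ) * ((X^(p*q) - 1) * (X - 1))
      = (expand ℤ r (cyclotomic (p*q) ℤ)) * ((X^p - 1) * (X^q - 1)) := by
  have hqp : ¬ q ∣ p := fun h => absurd (Nat.le_of_dvd hp.pos h) (by omega)
  have hrpq : ¬ r ∣ p * q := by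
    intro hdvd
    rcases (Nat.Prime.dvd_mul hr).mp hdvd with h | h
    · exact absurd (Nat.le_of_dvd hp.pos h) (by omega)
    · exact absurd (Nat.le_of_dvd hq.pos h) (by omega)
  haveI : Fact p.Prime := ⟨hp⟩
  have h3 : cyclotomic p ℤ * (X - 1) = X ^ p - 1 := cyclotomic_prime_mul_X_sub_one ℤ p
  have h4 : (cyclotomic (p*q) ℤ * cyclotomic p ℤ) * (X ^ q - 1) = X ^ (p*q) - 1 := by
    have h5 := congrArg (expand ℤ q) h3
    rw [map_mul, map_sub, map_one, expand_X, map_sub, map_one, map_pow, expand_X,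
      cyclotomic_expand_eq_cyclotomic_mul hq hqp, ← pow_mul, mul_comm q p] at h5
    exact h5
  rw [cyclotomic_expand_eq_cyclotomic_mul hr hrpq, ← h4, ← h3]
  ring

lemma zz_rec (p q r : ℕ) (hp : p.Prime) (hq : q.Prime) (hr : r.Prime)
    (hpq : p < q) (hqr : q < r) (n : ℤ) :
    zc (cyclotomic (p*q*r) ℤ) n - zc (cyclotomic (p*q*r) ℤ) (n-1)
      - zc (cyclotomic (p*q*r) ℤ) (n - (p:ℤ)*q) + zc (cyclotomic (p*q*r) ℤ) (n - (p:ℤ)*q - 1)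
    = ∑ m ∈ Finset.range (p*q+1), (cyclotomic (p*q) ℤ).coeff m * ee p q (n - (m:ℤ)*r) := by
  have hpoly := zz_poly p q r hp hq hr hpq hqr
  have hdegpq : (cyclotomic (p*q) ℤ).natDegree < p*q + 1 := by
    rw [natDegree_cyclotomic]
    exact lt_of_le_of_lt (Nat.totient_le _) (by omega)
  have hsum : expand ℤ r (cyclotomic (p*q) ℤ)
      = ∑ m ∈ Finset.range (p*q+1), (monomial (m*r) ((cyclotomic (p*q) ℤ).coeff m) : ℤ[X]) := by
    conv_lhs => rw [(cyclotomic (p*q) ℤ).as_sum_range' (p*q+1) hdegpq]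
    rw [map_sum]
    exact Finset.sum_congr rfl fun m _ => expand_monomial ..
  have hL : cyclotomic (p*q*r) ℤ * ((X^(p*q)-1)*(X-1))
      = ((cyclotomic (p*q*r) ℤ * X^(p*q+1) - cyclotomic (p*q*r) ℤ * X^(p*q))
          - cyclotomic (p*q*r) ℤ * X^1) + cyclotomic (p*q*r) ℤ * X^0 := by ring
  have hR : ∀ m : ℕ, (monomial (m*r) ((cyclotomic (p*q) ℤ).coeff m) : ℤ[X]) * ((X^p-1)*(X^q-1))
      = C ((cyclotomic (p*q) ℤ).coeff m)
          * ((((X^(p+q) - X^p) - X^q) + 1) * X^(m*r)) := by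
    intro m
    rw [← C_mul_X_pow_eq_monomial, pow_add]
    ring
  have key := congrArg (fun P => zc P n) hpoly
  simp only [hL, hsum, Finset.sum_mul] at key
  rw [zc_add, zc_sub, zc_sub, zc_mul_X_pow, zc_mul_X_pow, zc_mul_X_pow, zc_mul_X_pow,
    zc_sum] at key
  simp only [hR, zc_C_mul, zc_mul_X_pow] at key
  have hM : ∀ x : ℤ, zc ((((X:ℤ[X])^(p+q) - X^p) - X^q) + 1) x = ee p q x := by
    intro x
    rw [zc_add, zc_sub, zc_sub, zc_X_pow, zc_X_pow, zc_X_pow, zc_one]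
    unfold ee
    push_cast
    rfl
  simp only [hM] at key
  have harg1 : n - ((p*q+1 : ℕ) : ℤ) = n - (p:ℤ)*q - 1 := by push_cast; ring
  have harg2 : n - ((1:ℕ):ℤ) = n - 1 := by push_cast; ring
  have harg3 : n - ((0:ℕ):ℤ) = n := by push_cast; ring
  have harg4 : n - ((p*q : ℕ) : ℤ) = n - (p:ℤ)*q := by push_cast; ring
  rw [harg1, harg2, harg3, harg4] at key
  have hargm : ∀ m : ℕ, n - ((m*r : ℕ) : ℤ) = n - (m:ℤ)*r := by intro m; push_cast; ring
  simp only [hargm] at key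
  linarith [key]

end ZZAux

set_option maxHeartbeats 2000000 in
open ZZAux Finset in
/-- Zhao–Zhang: for primes `p < q < r` and `k ≥ 0`,
`a_{pqr}(k) = Σ_{m ≥ m₀} a_{pq}(m)·χ_k(m)`, where `m₀` is the smallest integer with
`m₀ r + p + q ≥ k + 1 + pq` (the sum effectively ranges over `m₀ ≤ m ≤ pq`, since
`a_{pq}(m) = 0` for `m > φ(pq)`). -/
theorem stmt_8 (p q r : ℕ) (hp : p.Prime) (hq : q.Prime) (hr : r.Prime)
    (hpq : p < q) (hqr : q < r) (k : ℕ) (m₀ : ℤ)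
    (hm₀ : k + 1 + p * q ≤ m₀ * r + p + q)
    (hm₀min : ∀ m : ℤ, m < m₀ → ¬ ((k : ℤ) + 1 + p * q ≤ m * r + p + q)) :
    (cyclotomic (p * q * r) ℤ).coeff k =
      ∑ m ∈ Finset.Icc m₀ ((p : ℤ) * q), apq p q m * chi p q r k m := by
  classical
  have hp2 := hp.two_le
  have hq2 := hq.two_le
  have hr2 := hr.two_le
  have hpqb : p + q + 1 ≤ p * q := by nlinarith
  set Φ : Polynomial ℤ := cyclotomic (p*q*r) ℤ with hΦ
  set A : ℤ → ℤ := fun n => zc Φ n with hA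
  set Q : ℤ := (p:ℤ) * q with hQ
  have hQpos : 0 < Q := by rw [hQ]; positivity
  have hQb : (p:ℤ) + q + 1 ≤ Q := by rw [hQ]; exact_mod_cast hpqb
  have hp0 : (0:ℤ) ≤ p := Int.ofNat_nonneg p
  have hq0 : (0:ℤ) ≤ q := Int.ofNat_nonneg q
  have hk0 : (0:ℤ) ≤ k := Int.ofNat_nonneg k
  set S : ℕ := r + 1 with hS
  set Kd : ℕ := p*q*r + p + q + 1 with hKd
  have hSQ : (S:ℤ) * Q = (p:ℤ)*q*r + (p:ℤ)*q := by rw [hS, hQ]; push_cast; ring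
  have hKdZ : (Kd:ℤ) = (p:ℤ)*q*r + p + q + 1 := by rw [hKd]; push_cast; ring
  have hdeg3 : ∀ n : ℤ, (p:ℤ)*q*r ≤ n → A n = 0 := by
    intro n hn
    apply zc_zero_of_lt
    rw [hΦ, natDegree_cyclotomic]
    have h := Nat.totient_lt (p*q*r) (by nlinarith)
    have h2 : ((Nat.totient (p*q*r) : ℕ) : ℤ) < ((p*q*r : ℕ) : ℤ) := by exact_mod_cast h
    push_cast at h2 ⊢
    linarith
  -- Step B : telescope down from k
  have hB : A k = ∑ i ∈ range Kd, (A ((k:ℤ) + i) - A ((k:ℤ) + (i+1:ℕ))) := by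
    have ht := Finset.sum_range_sub' (fun i : ℕ => A ((k:ℤ) + i)) Kd
    have hKd0 : A ((k:ℤ) + (Kd:ℕ)) = 0 := by
      apply hdeg3
      rw [hKdZ]
      linarith
    simp only [Nat.cast_zero, add_zero] at ht
    rw [ht, hKd0, sub_zero]
  -- Step C : per-n telescope over multiples of Q
  have hC : ∀ n : ℤ, 1 ≤ n → A (n - 1) - A n
      = ∑ s ∈ range S, (A (n + ((s:ℤ)+1)*Q) - A (n + ((s:ℤ)+1)*Q - 1)
          - A (n + ((s:ℤ)+1)*Q - Q) + A (n + ((s:ℤ)+1)*Q - Q - 1)) := by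
    intro n hn
    have ht := Finset.sum_range_sub
      (fun s : ℕ => A (n + (s:ℤ)*Q) - A (n + (s:ℤ)*Q - 1)) S
    have hmatch : ∀ s ∈ range S,
        (A (n + ((s:ℤ)+1)*Q) - A (n + ((s:ℤ)+1)*Q - 1)
          - A (n + ((s:ℤ)+1)*Q - Q) + A (n + ((s:ℤ)+1)*Q - Q - 1))
        = (fun s : ℕ => A (n + (s:ℤ)*Q) - A (n + (s:ℤ)*Q - 1)) (s+1)
          - (fun s : ℕ => A (n + (s:ℤ)*Q) - A (n + (s:ℤ)*Q - 1)) s := by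
      intro s _
      simp only
      rw [show n + ((s:ℤ)+1)*Q - Q = n + (s:ℤ)*Q from by ring]
      push_cast
      ring
    rw [Finset.sum_congr rfl hmatch, ht]
    have hz1 : A (n + (S:ℤ)*Q) = 0 := by
      apply hdeg3; rw [hSQ]; linarith
    have hz2 : A (n + (S:ℤ)*Q - 1) = 0 := by
      apply hdeg3; rw [hSQ]; linarith
    simp only [Nat.cast_zero, zero_mul, add_zero]
    rw [hz1, hz2]
    ring
  -- Combine with recurrence
  have hrec := zz_rec p q r hp hq hr hpq hqr
  have hmain : A k = ∑ m ∈ range (p*q+1), (cyclotomic (p*q) ℤ).coeff m *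
      (∑ i ∈ range Kd, ∑ s ∈ range S, ee p q ((k:ℤ) + 1 + i + ((s:ℤ)+1)*Q - (m:ℤ)*r)) := by
    rw [hB]
    have step1 : ∀ i ∈ range Kd, A ((k:ℤ) + i) - A ((k:ℤ) + (i+1:ℕ))
        = ∑ s ∈ range S, ∑ m ∈ range (p*q+1), (cyclotomic (p*q) ℤ).coeff m *
            ee p q ((k:ℤ) + 1 + i + ((s:ℤ)+1)*Q - (m:ℤ)*r) := by
      intro i _
      have e1 : (k:ℤ) + i = ((k:ℤ) + 1 + i) - 1 := by ring
      have e2 : (k:ℤ) + (i+1:ℕ) = (k:ℤ) + 1 + i := by push_cast; ring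
      rw [e1, e2, hC ((k:ℤ)+1+i) (by push_cast; omega)]
      refine Finset.sum_congr rfl fun s _ => ?_
      have hthis := hrec ((k:ℤ) + 1 + i + ((s:ℤ)+1)*Q)
      rw [← hQ] at hthis
      rw [← hthis]
    rw [Finset.sum_congr rfl step1]
    rw [Finset.sum_congr rfl fun i (_ : i ∈ range Kd) => Finset.sum_comm]
    rw [Finset.sum_comm]
    simp only [Finset.mul_sum]
  -- Evaluate the inner double sum for each m
  have hinner : ∀ m ∈ range (p*q+1),
      (∑ i ∈ range Kd, ∑ s ∈ range S, ee p q ((k:ℤ) + 1 + i + ((s:ℤ)+1)*Q - (m:ℤ)*r))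
        = (if m₀ ≤ (m:ℤ) then chi p q r k m else 0) := by
    intro m hm
    rw [mem_range] at hm
    have hmQ : (m:ℤ) ≤ Q := by
      rw [hQ]; exact_mod_cast Nat.le_of_lt_succ hm
    have hmr : (m:ℤ) * r ≤ Q * r := mul_le_mul_of_nonneg_right hmQ (by positivity)
    have hmr' : (m:ℤ) * r ≤ (p:ℤ)*q*r := by
      have h := hmr; rw [hQ] at h; linarith
    set Y : ℤ := (m:ℤ)*r - k - 1 with hY
    -- four counters
    have hcnt : ∀ o : ℤ, 0 ≤ o → o ≤ (p:ℤ) + q →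
        (∑ i ∈ range Kd, ∑ s ∈ range S,
          if (k:ℤ) + 1 + i + ((s:ℤ)+1)*Q - (m:ℤ)*r = o then (1:ℤ) else 0)
        = max 0 (min (S:ℤ) ((Y + o) / Q)) := by
      intro o ho1 ho2
      have hiff : ∀ (i s : ℕ), ((k:ℤ) + 1 + i + ((s:ℤ)+1)*Q - (m:ℤ)*r = o)
          ↔ ((i:ℤ) + ((s:ℤ)+1)*Q = Y + o) := by
        intro i s; rw [hY]; constructor <;> intro h <;> linarith
      rw [Finset.sum_congr rfl fun i _ => Finset.sum_congr rfl fun s _ =>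
        if_congr (hiff i s) rfl rfl]
      apply cnt_eval
      · exact hQpos
      · rw [hY, hKdZ]
        linarith [hQpos]
    have hsplit : (∑ i ∈ range Kd, ∑ s ∈ range S,
        ee p q ((k:ℤ) + 1 + i + ((s:ℤ)+1)*Q - (m:ℤ)*r))
      = max 0 (min (S:ℤ) ((Y + ((p:ℤ)+q)) / Q)) - max 0 (min (S:ℤ) ((Y + (p:ℤ)) / Q))
        - max 0 (min (S:ℤ) ((Y + (q:ℤ)) / Q)) + max 0 (min (S:ℤ) ((Y + 0) / Q)) := by
      rw [← hcnt ((p:ℤ)+q) (by linarith) le_rfl,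
        ← hcnt (p:ℤ) hp0 (by linarith),
        ← hcnt (q:ℤ) hq0 (by linarith),
        ← hcnt 0 le_rfl (by linarith)]
      unfold ee
      simp only [Finset.sum_add_distrib, Finset.sum_sub_distrib]
    rw [hsplit]
    by_cases hcase : m₀ ≤ (m:ℤ)
    · -- main case : evaluate via floor_diff and match chi
      rw [if_pos hcase]
      have hm₀r : m₀ * r ≤ (m:ℤ) * r := mul_le_mul_of_nonneg_right hcase (by positivity)
      have hYlb : Q - p - q ≤ Y := by rw [hY]; linarith
      have hY1 : 1 ≤ Y := by linarith
      have hYub : Y + ((p:ℤ)+q) < (S:ℤ)*Q := by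
        rw [hSQ, hY]
        linarith
      have hF : ∀ w : ℤ, 0 ≤ w → w < (S:ℤ)*Q → max 0 (min (S:ℤ) (w/Q)) = w/Q := by
        intro w h0 h1
        have d0 : 0 ≤ w / Q := Int.ediv_nonneg h0 (le_of_lt hQpos)
        have d1 : w / Q < (S:ℤ) := by rw [Int.ediv_lt_iff_lt_mul hQpos]; exact h1
        omega
      have hFpq := hF (Y + ((p:ℤ)+q)) (by linarith) hYub
      have hFp := hF (Y + (p:ℤ)) (by linarith) (by linarith)
      have hFq := hF (Y + (q:ℤ)) (by linarith) (by linarith)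
      have hF0' := hF (Y + 0) (by linarith) (by linarith)
      rw [hFpq, hFp, hFq, hF0']
      have f1 := floor_diff Q (Y + q) p hQpos hp0 (by linarith)
      have f2 := floor_diff Q Y p hQpos hp0 (by linarith)
      have e1 : Y + ((p:ℤ)+q) = (Y + q) + p := by ring
      have e2 : Y + (0:ℤ) = Y := by ring
      rw [e1, e2]
      have hiff1 : (∃ s : ℤ, Y + q < s * Q ∧ s * Q ≤ Y + q + p)
          ↔ (∃ s : ℤ, (m:ℤ) * r + q < (k:ℤ) + 1 + s * p * q ∧
              (k:ℤ) + 1 + s * p * q ≤ (m:ℤ) * r + q + p) := by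
        refine exists_congr fun s => ?_
        have hsQ : s * Q = s * p * q := by rw [hQ]; ring
        rw [hY, hsQ]
        constructor <;> rintro ⟨h1, h2⟩ <;> exact ⟨by linarith, by linarith⟩
      have hiff2 : (∃ s : ℤ, Y < s * Q ∧ s * Q ≤ Y + p)
          ↔ (∃ s : ℤ, (m:ℤ) * r < (k:ℤ) + 1 + s * p * q ∧
              (k:ℤ) + 1 + s * p * q ≤ (m:ℤ) * r + p) := by
        refine exists_congr fun s => ?_
        have hsQ : s * Q = s * p * q := by rw [hQ]; ring
        rw [hY, hsQ]
        constructor <;> rintro ⟨h1, h2⟩ <;> exact ⟨by linarith, by linarith⟩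
      have hexcl : ¬((∃ s : ℤ, Y + q < s * Q ∧ s * Q ≤ Y + q + p)
          ∧ (∃ s : ℤ, Y < s * Q ∧ s * Q ≤ Y + p)) := by
        rintro ⟨⟨s1, a1, b1⟩, ⟨s2, a2, b2⟩⟩
        have hpq' : (p:ℤ) < q := by exact_mod_cast hpq
        have h1 : s2 * Q < s1 * Q := by linarith
        have h2 : s2 < s1 := lt_of_mul_lt_mul_right h1 (le_of_lt hQpos)
        have h3 : (s2 + 1) * Q ≤ s1 * Q := mul_le_mul_of_nonneg_right (by omega) (le_of_lt hQpos)
        nlinarith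
      have hchi : chi p q r k m = if (∃ s : ℤ, Y + q < s * Q ∧ s * Q ≤ Y + q + p) then 1
          else if (∃ s : ℤ, Y < s * Q ∧ s * Q ≤ Y + p) then -1 else 0 := by
        unfold chi
        rw [if_congr hiff1.symm rfl (if_congr hiff2.symm rfl rfl)]
      rw [hchi]
      by_cases h1 : ∃ s : ℤ, Y + q < s * Q ∧ s * Q ≤ Y + q + p
      · have hx2 : ¬∃ s : ℤ, Y < s * Q ∧ s * Q ≤ Y + p := fun h2 => hexcl ⟨h1, h2⟩
        rw [if_pos h1] at f1
        rw [if_neg hx2] at f2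
        rw [if_pos h1]
        linarith
      · rw [if_neg h1] at f1
        rw [if_neg h1]
        by_cases h2 : ∃ s : ℤ, Y < s * Q ∧ s * Q ≤ Y + p
        · rw [if_pos h2] at f2; rw [if_pos h2]; linarith
        · rw [if_neg h2] at f2; rw [if_neg h2]; linarith
    · -- vanishing case : m < m₀
      rw [if_neg hcase]
      have hmlt : (m:ℤ) < m₀ := by omega
      have hmin := hm₀min (m:ℤ) hmlt
      push_neg at hmin
      have hYQ : Y + ((p:ℤ)+q) < Q := by
        rw [hY]; linarith
      have hF0 : ∀ w : ℤ, w < Q → max 0 (min (S:ℤ) (w/Q)) = 0 := by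
        intro w hw
        have h1 : w / Q < 1 := by rw [Int.ediv_lt_iff_lt_mul hQpos]; linarith
        have hS0 : (0:ℤ) ≤ S := Int.ofNat_nonneg S
        omega
      rw [hF0 (Y + ((p:ℤ)+q)) (by linarith), hF0 (Y + (p:ℤ)) (by linarith),
        hF0 (Y + (q:ℤ)) (by linarith), hF0 (Y + 0) (by linarith)]
      ring
  -- assemble
  have hAk : Φ.coeff k = A k := (zc_natCast Φ k).symm
  have hmain2 : A k = ∑ mn ∈ range (p*q+1), (cyclotomic (p*q) ℤ).coeff mn *
      (if m₀ ≤ (mn:ℤ) then chi p q r k mn else 0) := by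
    rw [hmain]
    exact Finset.sum_congr rfl fun m hm => by rw [hinner m hm]
  -- range (p*q+1) → Icc 0 Q
  have hH1 : (∑ mn ∈ range (p*q+1), (cyclotomic (p*q) ℤ).coeff mn *
      (if m₀ ≤ (mn:ℤ) then chi p q r k mn else 0))
      = ∑ m ∈ Finset.Icc (0:ℤ) Q, apq p q m * (if m₀ ≤ m then chi p q r k m else 0) := by
    refine Finset.sum_nbij' (fun mn : ℕ => (mn:ℤ)) (fun m : ℤ => m.toNat) ?_ ?_ ?_ ?_ ?_
    · intro a ha
      rw [mem_range] at ha
      rw [Finset.mem_Icc]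
      refine ⟨by positivity, ?_⟩
      rw [hQ]
      show ((a:ℤ)) ≤ (p:ℤ) * q
      exact_mod_cast Nat.le_of_lt_succ ha
    · intro b hb
      rw [Finset.mem_Icc] at hb
      rw [mem_range]
      have hb2 : b ≤ ((p*q : ℕ) : ℤ) := by rw [hQ] at hb; push_cast; exact hb.2
      exact Nat.lt_succ_of_le (Int.toNat_le.mpr hb2)
    · intro a _; simp
    · intro b hb; rw [Finset.mem_Icc] at hb; simp [Int.toNat_of_nonneg hb.1]
    · intro a _
      simp [apq]
  -- merge the two Icc index sets
  have hA1 : (∑ m ∈ Finset.Icc (0:ℤ) Q, apq p q m * (if m₀ ≤ m then chi p q r k m else 0))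
      = ∑ m ∈ Finset.Icc (0:ℤ) Q,
          (if m₀ ≤ m ∧ 0 ≤ m then apq p q m * chi p q r k m else 0) := by
    refine Finset.sum_congr rfl fun m hm => ?_
    rw [Finset.mem_Icc] at hm
    by_cases hc1 : m₀ ≤ m
    · rw [if_pos hc1, if_pos ⟨hc1, hm.1⟩]
    · rw [if_neg hc1, if_neg (fun hx => hc1 hx.1)]; ring
  have hA2 : (∑ m ∈ Finset.Icc (0:ℤ) Q,
          (if m₀ ≤ m ∧ 0 ≤ m then apq p q m * chi p q r k m else 0))
      = ∑ m ∈ Finset.Icc (min m₀ 0) Q,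
          (if m₀ ≤ m ∧ 0 ≤ m then apq p q m * chi p q r k m else 0) := by
    apply Finset.sum_subset
    · exact Finset.Icc_subset_Icc (by omega) le_rfl
    · intro x hx hnx
      rw [Finset.mem_Icc] at hx
      rw [Finset.mem_Icc] at hnx
      push_neg at hnx
      rw [if_neg]
      rintro ⟨h1, h2⟩
      exact absurd (hnx h2) (by omega)
  have hA3 : (∑ m ∈ Finset.Icc m₀ Q,
          (if m₀ ≤ m ∧ 0 ≤ m then apq p q m * chi p q r k m else 0))
      = ∑ m ∈ Finset.Icc (min m₀ 0) Q,
          (if m₀ ≤ m ∧ 0 ≤ m then apq p q m * chi p q r k m else 0) := by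
    apply Finset.sum_subset
    · exact Finset.Icc_subset_Icc (by omega) le_rfl
    · intro x hx hnx
      rw [Finset.mem_Icc] at hx
      rw [Finset.mem_Icc] at hnx
      push_neg at hnx
      rw [if_neg]
      rintro ⟨h1, h2⟩
      exact absurd (hnx h1) (by omega)
  have hA4 : (∑ m ∈ Finset.Icc m₀ Q,
          (if m₀ ≤ m ∧ 0 ≤ m then apq p q m * chi p q r k m else 0))
      = ∑ m ∈ Finset.Icc m₀ Q, apq p q m * chi p q r k m := by
    refine Finset.sum_congr rfl fun m hm => ?_
    rw [Finset.mem_Icc] at hm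
    by_cases hc2 : 0 ≤ m
    · rw [if_pos ⟨hm.1, hc2⟩]
    · rw [if_neg (fun hx => hc2 hx.2)]
      rw [apq, if_neg hc2]
      ring
  rw [hAk, hmain2, hH1, hA1, hA2, ← hA3, hA4]
end

section
/- Let p < q < r be primes and k an integer. Then Σ_{m ≥ 0} a_{pq}(m)·χ_k(m) = 0, where the sum ranges over all m with 0 ≤ m ≤ φ(pq). -/
open Polynomial

section ZZaux

open Finset AddMonoidAlgebra


lemma aux_divisors (p q : ℕ) (hp : p.Prime) (hq : q.Prime) (hne : p ≠ q) :
    (p*q).divisors = {1, p, q, p*q} := by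
  rw [Nat.divisors_mul, hp.divisors, hq.divisors]
  ext a
  simp only [Finset.mem_mul, Finset.mem_insert, Finset.mem_singleton]
  aesop

lemma aux_cyc (p q : ℕ) (hp : p.Prime) (hq : q.Prime) (hne : p ≠ q) :
    cyclotomic (p*q) ℤ * (X^q - 1) = (X - 1) * ∑ i ∈ Finset.range q, (X:ℤ[X])^(p*i) := by
  haveI : Fact p.Prime := ⟨hp⟩
  haveI : Fact q.Prime := ⟨hq⟩
  have hpq1 : 1 < p * q := by nlinarith [hp.two_le, hq.two_le]
  have hXp : (X^p - 1 : ℤ[X]) ≠ 0 := by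
    have := X_pow_sub_C_ne_zero (R := ℤ) hp.pos 1
    simpa using this
  apply mul_right_cancel₀ hXp
  have h1 : ∏ i ∈ (p*q).divisors, cyclotomic i ℤ = X^(p*q) - 1 :=
    prod_cyclotomic_eq_X_pow_sub_one (Nat.mul_pos hp.pos hq.pos) ℤ
  rw [aux_divisors p q hp hq hne] at h1
  have hd1 : (1:ℕ) ∉ ({p, q, p*q} : Finset ℕ) := by
    simp only [Finset.mem_insert, Finset.mem_singleton]
    push_neg
    exact ⟨hp.ne_one.symm, hq.ne_one.symm, hpq1.ne⟩
  have hd2 : p ∉ ({q, p*q} : Finset ℕ) := by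
    simp only [Finset.mem_insert, Finset.mem_singleton]
    push_neg
    exact ⟨hne, fun h => by nlinarith [hp.pos, hq.one_lt]⟩
  have hd3 : q ∉ ({p*q} : Finset ℕ) := by
    simp only [Finset.mem_singleton]
    intro h
    nlinarith [hq.pos, hp.one_lt]
  rw [Finset.prod_insert hd1, Finset.prod_insert hd2, Finset.prod_insert hd3,
    Finset.prod_singleton, cyclotomic_one] at h1
  have h2 : (cyclotomic q ℤ) * (X - 1) = X^q - 1 := cyclotomic_prime_mul_X_sub_one ℤ q
  have h3 : (cyclotomic p ℤ) * (X - 1) = X^p - 1 := cyclotomic_prime_mul_X_sub_one ℤ p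
  have h4 : (∑ i ∈ Finset.range q, (X:ℤ[X])^(p*i)) * (X^p - 1) = X^(p*q) - 1 := by
    have h := geom_sum_mul (X^p : ℤ[X]) q
    simp only [← pow_mul] at h
    exact h
  have key : cyclotomic (p*q) ℤ * (X^q - 1) * (X^p - 1) = (X^(p*q) - 1) * (X - 1) := by
    rw [← h2, ← h3, ← h1]; ring
  rw [key, mul_assoc, h4]; ring

noncomputable def Eaux (n a : ℕ) : AddMonoidAlgebra ℤ (ZMod n) :=
  AddMonoidAlgebra.single ((a : ZMod n)) 1

lemma Eaux_mul (n a b : ℕ) : Eaux n a * Eaux n b = Eaux n (a + b) := by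
  simp [Eaux, AddMonoidAlgebra.single_mul_single]

lemma Eaux_pow (n a m : ℕ) : Eaux n a ^ m = Eaux n (m * a) := by
  simp [Eaux, AddMonoidAlgebra.single_pow, nsmul_eq_mul]

lemma Eaux_congr (n a b : ℕ) (h : a ≡ b [MOD n]) : Eaux n a = Eaux n b := by
  unfold Eaux
  rw [(ZMod.natCast_eq_natCast_iff a b n).2 h]

lemma Eaux_one (n : ℕ) : (1 : AddMonoidAlgebra ℤ (ZMod n)) = Eaux n 0 := by
  simp [Eaux, AddMonoidAlgebra.one_def]

lemma sum_range_mul_split' {M : Type*} [AddCommMonoid M] (p q : ℕ) (hp : 0 < p) (f : ℕ → M) :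
    ∑ u ∈ Finset.range (p*q), f u = ∑ t ∈ Finset.range q, ∑ j ∈ Finset.range p, f (p*t+j) := by
  rw [← Finset.sum_product']
  apply Finset.sum_nbij' (i := fun u => (u / p, u % p)) (j := fun x => p * x.1 + x.2)
  · intro u hu
    simp only [Finset.mem_range] at hu
    simp only [Finset.mem_product, Finset.mem_range]
    exact ⟨Nat.div_lt_of_lt_mul (by omega), Nat.mod_lt _ hp⟩
  · intro x hx
    simp only [Finset.mem_product, Finset.mem_range] at hx
    simp only [Finset.mem_range]
    calc p * x.1 + x.2 < p * x.1 + p := by omega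
      _ = p * (x.1 + 1) := by ring
      _ ≤ p * q := Nat.mul_le_mul_left p hx.1
  · intro u _
    exact Nat.div_add_mod u p
  · intro x hx
    simp only [Finset.mem_product, Finset.mem_range] at hx
    have h1 : (p * x.1 + x.2) / p = x.1 := by
      rw [Nat.mul_add_div hp, Nat.div_eq_of_lt hx.2, add_zero]
    have h2 : (p * x.1 + x.2) % p = x.2 := by
      rw [Nat.mul_add_mod, Nat.mod_eq_of_lt hx.2]
    simp [h1, h2]
  · intro u _
    rw [Nat.div_add_mod u p]

-- the all-ones element is shift invariant
lemma Eaux_shift (n a : ℕ) (hn : 0 < n) :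
    Eaux n a * (∑ u ∈ Finset.range n, Eaux n u) = ∑ u ∈ Finset.range n, Eaux n u := by
  haveI : NeZero n := ⟨hn.ne'⟩
  have huniv : ∑ u ∈ Finset.range n, Eaux n u
      = ∑ t : ZMod n, AddMonoidAlgebra.single t (1:ℤ) := by
    apply Finset.sum_nbij' (f := fun u => Eaux n u) (g := fun t => AddMonoidAlgebra.single t (1:ℤ))
      (i := fun u => ((u : ZMod n))) (j := fun t => t.val)
    · intro u _; exact Finset.mem_univ _
    · intro t _
      simp only [Finset.mem_range]
      exact ZMod.val_lt t
    · intro u hu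
      exact ZMod.val_natCast_of_lt (Finset.mem_range.1 hu)
    · intro t _
      exact ZMod.natCast_rightInverse t
    · intro u _; rfl
  rw [huniv, Finset.mul_sum]
  have : ∀ t : ZMod n, Eaux n a * AddMonoidAlgebra.single t (1:ℤ)
      = AddMonoidAlgebra.single ((a : ZMod n) + t) (1:ℤ) := by
    intro t
    simp [Eaux, AddMonoidAlgebra.single_mul_single]
  simp only [this]
  exact Fintype.sum_equiv (Equiv.addLeft ((a : ZMod n))) _ _ (fun t => rfl)

lemma key_alg (p q r : ℕ) (hp : p.Prime) (hq : q.Prime) (hr : r.Prime)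
    (hpq : p < q) (hqr : q < r) :
    (Polynomial.aeval (Eaux (p*q) r) (cyclotomic (p*q) ℤ)) *
      ((∑ j ∈ Finset.range p, Eaux (p*q) j) * (Eaux (p*q) q - 1)) = 0 := by
  set n := p * q with hn
  have hn0 : 0 < n := Nat.mul_pos hp.pos hq.pos
  have hrp : Nat.Coprime r p := (Nat.coprime_primes hr hp).2 (by omega)
  have hrq : Nat.Coprime r q := (Nat.coprime_primes hr hq).2 (by omega)
  set y : AddMonoidAlgebra ℤ (ZMod n) := Eaux n r with hy
  -- the polynomial identity pushed through aeval
  have step1 : (aeval y (cyclotomic n ℤ)) * (y^q - 1)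
      = (y - 1) * ∑ i ∈ Finset.range q, y^(p*i) := by
    have := congrArg (aeval y) (aux_cyc p q hp hq (by omega))
    simpa only [map_mul, map_sub, map_pow, map_sum, map_one, aeval_X] using this
  -- reindex the geometric-type sum
  have step2 : ∑ i ∈ Finset.range q, y^(p*i) = ∑ t ∈ Finset.range q, Eaux n (p*t) := by
    obtain ⟨r₁, -, hr₁⟩ := Nat.exists_mul_mod_eq_one_of_coprime hrq hq.one_lt
    apply Finset.sum_nbij' (f := fun i => y^(p*i)) (g := fun t => Eaux n (p*t))
      (i := fun i => (i * r) % q) (j := fun t => (t * r₁) % q)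
    · intro i _; exact Finset.mem_range.2 (Nat.mod_lt _ hq.pos)
    · intro t _; exact Finset.mem_range.2 (Nat.mod_lt _ hq.pos)
    · intro i hi
      have h1 : (i * r % q) * r₁ % q = i * (r * r₁) % q := by
        rw [Nat.mul_mod, Nat.mod_mod_of_dvd _ dvd_rfl]
        rw [← Nat.mul_mod, mul_assoc]
      have h2 : i * (r * r₁) % q = i % q := by
        rw [Nat.mul_mod, hr₁, mul_one, Nat.mod_mod_of_dvd i dvd_rfl]
      rw [h1, h2, Nat.mod_eq_of_lt (Finset.mem_range.1 hi)]
    · intro t ht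
      have h1 : (t * r₁ % q) * r % q = t * (r₁ * r) % q := by
        rw [Nat.mul_mod, Nat.mod_mod_of_dvd _ dvd_rfl]
        rw [← Nat.mul_mod, mul_assoc]
      have h2 : t * (r₁ * r) % q = t % q := by
        rw [mul_comm r₁ r, Nat.mul_mod, hr₁, mul_one, Nat.mod_mod_of_dvd t dvd_rfl]
      rw [h1, h2, Nat.mod_eq_of_lt (Finset.mem_range.1 ht)]
    · intro i _
      rw [hy, Eaux_pow]
      apply Eaux_congr
      have : i * r ≡ (i * r) % q [MOD q] := (Nat.mod_modEq _ _).symm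
      have h := Nat.ModEq.mul_left' (c := p) this
      calc p * i * r = p * (i * r) := by ring
        _ ≡ p * ((i*r) % q) [MOD p * q] := h
  -- product with S_p gives the all-ones sum
  have step3 : (∑ t ∈ Finset.range q, Eaux n (p*t)) * (∑ j ∈ Finset.range p, Eaux n j)
      = ∑ u ∈ Finset.range n, Eaux n u := by
    rw [Finset.sum_mul_sum, sum_range_mul_split' p q hp.pos]
    apply Finset.sum_congr rfl
    intro t _
    apply Finset.sum_congr rfl
    intro j _
    rw [Eaux_mul]
  -- (Eaux q - 1) is a multiple of (y^q - 1)
  obtain ⟨r₂, -, hr₂⟩ := Nat.exists_mul_mod_eq_one_of_coprime hrp hp.one_lt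
  have step4 : Eaux n q - 1 = (y^q - 1) * ∑ i ∈ Finset.range r₂, (y^q)^i := by
    have hgeom := geom_sum_mul (y^q) r₂
    have hyq : y^q = Eaux n (q*r) := by rw [hy, Eaux_pow]
    have hpow : (y^q)^r₂ = Eaux n q := by
      rw [← pow_mul, hy, Eaux_pow]
      apply Eaux_congr
      have h1 : r * r₂ ≡ 1 [MOD p] := by
        unfold Nat.ModEq
        rw [hr₂, Nat.mod_eq_of_lt hp.one_lt]
      have h := Nat.ModEq.mul_left' (c := q) h1
      calc q * r₂ * r = q * (r * r₂) := by ring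
        _ ≡ q * 1 [MOD p * q] := by rw [mul_comm p q]; exact h
        _ = q := by ring
    rw [← hpow]
    linear_combination -hgeom
  -- assemble
  have hfinal : (aeval y (cyclotomic n ℤ)) *
      ((∑ j ∈ Finset.range p, Eaux n j) * (Eaux n q - 1)) =
      ((y - 1) * (∑ u ∈ Finset.range n, Eaux n u)) *
        ((∑ i ∈ Finset.range r₂, (y^q)^i)) := by
    rw [step4, ← step3, ← step2]
    calc (aeval y (cyclotomic n ℤ)) *
        ((∑ j ∈ Finset.range p, Eaux n j) * ((y^q - 1) * ∑ i ∈ Finset.range r₂, (y^q)^i))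
        = ((aeval y (cyclotomic n ℤ)) * (y^q - 1)) *
            (∑ j ∈ Finset.range p, Eaux n j) * (∑ i ∈ Finset.range r₂, (y^q)^i) := by ring
      _ = ((y - 1) * ∑ i ∈ Finset.range q, y^(p*i)) *
            (∑ j ∈ Finset.range p, Eaux n j) * (∑ i ∈ Finset.range r₂, (y^q)^i) := by rw [step1]
      _ = _ := by ring
  rw [hfinal]
  have hzero : (y - 1) * (∑ u ∈ Finset.range n, Eaux n u) = 0 := by
    rw [sub_mul, one_mul, hy, Eaux_shift n r hn0, sub_self]
  rw [hzero, zero_mul]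
lemma sum_indicator_unique {α : Type*} (s : Finset α) (P : α → Prop) [DecidablePred P]
    (huniq : ∀ a ∈ s, ∀ b ∈ s, P a → P b → a = b) :
    ∑ a ∈ s, (if P a then (1:ℤ) else 0) = if ∃ a ∈ s, P a then 1 else 0 := by
  by_cases h : ∃ a ∈ s, P a
  · obtain ⟨a0, ha0, hP⟩ := h
    rw [if_pos ⟨a0, ha0, hP⟩, Finset.sum_eq_single a0]
    · rw [if_pos hP]
    · intro b hb hne
      rw [if_neg (fun hPb => hne (huniq b hb a0 ha0 hPb hP))]
    · intro h; exact absurd ha0 h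
  · rw [if_neg h, Finset.sum_eq_zero]
    intro a ha
    rw [if_neg (fun hPa => h ⟨a, ha, hPa⟩)]
lemma cond_iff (p q : ℕ) (hp : 0 < p) (hq : 0 < q) (k : ℤ) (A : ℕ) :
    (∃ s : ℤ, (A:ℤ) < k + 1 + s * p * q ∧ k + 1 + s * p * q ≤ A + p) ↔
      ∃ j ∈ Finset.range p, ((A + j : ℕ) : ZMod (p*q)) = ((k : ℤ) : ZMod (p*q)) := by
  constructor
  · rintro ⟨s, h1, h2⟩
    set j : ℤ := k + 1 + s * p * q - A - 1 with hj
    have hj0 : 0 ≤ j := by rw [hj]; linarith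
    have hjp : j < p := by rw [hj]; linarith
    refine ⟨j.toNat, Finset.mem_range.2 (by omega), ?_⟩
    have hdvd : ((p*q : ℕ) : ℤ) ∣ k - ((A:ℤ) + j) := by
      refine ⟨-s, ?_⟩
      rw [hj]
      push_cast
      ring
    have hmod : ((A:ℤ) + j) ≡ k [ZMOD ((p*q : ℕ) : ℤ)] := Int.modEq_iff_dvd.2 hdvd
    have := (ZMod.intCast_eq_intCast_iff _ _ _).2 hmod
    rw [show ((A:ℤ) + j) = ((A + j.toNat : ℕ) : ℤ) by push_cast [Int.toNat_of_nonneg hj0]; ring]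
      at this
    rwa [Int.cast_natCast] at this
  · rintro ⟨j, hjmem, hcast⟩
    have hj : (j:ℕ) < p := Finset.mem_range.1 hjmem
    have hmod : ((A + j : ℕ) : ℤ) ≡ k [ZMOD ((p*q : ℕ) : ℤ)] := by
      rw [← ZMod.intCast_eq_intCast_iff]
      rwa [Int.cast_natCast]
    obtain ⟨d, hd⟩ := (Int.modEq_iff_dvd.1 hmod)
    have heq : k + 1 + (-d) * p * q = (A:ℤ) + j + 1 := by
      push_cast at hd ⊢
      linear_combination hd
    refine ⟨-d, ?_, ?_⟩
    · rw [heq]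
      have : (0:ℤ) ≤ j := Int.natCast_nonneg j
      linarith
    · rw [heq]
      have : (j:ℤ) < p := by exact_mod_cast hj
      linarith

lemma unique_j (n p : ℕ) (hpn : p ≤ n) (A : ℕ) (κ : ZMod n) :
    ∀ j ∈ Finset.range p, ∀ j' ∈ Finset.range p,
      ((A + j : ℕ) : ZMod n) = κ → ((A + j' : ℕ) : ZMod n) = κ → j = j' := by
  intro j hj j' hj' h1 h2
  rw [Finset.mem_range] at hj hj'
  have : ((A + j : ℕ) : ZMod n) = ((A + j' : ℕ) : ZMod n) := h1.trans h2.symm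
  have hmod : (A + j) ≡ (A + j') [MOD n] := (ZMod.natCast_eq_natCast_iff _ _ _).1 this
  have := Nat.ModEq.add_left_cancel' A hmod
  unfold Nat.ModEq at this
  rwa [Nat.mod_eq_of_lt (lt_of_lt_of_le hj hpn),
    Nat.mod_eq_of_lt (lt_of_lt_of_le hj' hpn)] at this

lemma excl (p q : ℕ) (hp : p.Prime) (hq : q.Prime) (hpq : p < q) (k : ℤ) (A : ℕ)
    (h1 : ∃ j ∈ Finset.range p, ((A + q + j : ℕ) : ZMod (p*q)) = ((k : ℤ) : ZMod (p*q)))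
    (h2 : ∃ j ∈ Finset.range p, ((A + j : ℕ) : ZMod (p*q)) = ((k : ℤ) : ZMod (p*q))) :
    False := by
  obtain ⟨j, hj, hc1⟩ := h1
  obtain ⟨j', hj', hc2⟩ := h2
  rw [Finset.mem_range] at hj hj'
  have hqp : q + p ≤ p * q := by nlinarith [hp.two_le, hq.two_le]
  have : ((A + (q + j) : ℕ) : ZMod (p*q)) = ((A + j' : ℕ) : ZMod (p*q)) := by
    rw [show A + (q + j) = A + q + j by ring]
    exact hc1.trans hc2.symm
  have hmod : (A + (q + j)) ≡ (A + j') [MOD p*q] := (ZMod.natCast_eq_natCast_iff _ _ _).1 this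
  have h3 := Nat.ModEq.add_left_cancel' A hmod
  unfold Nat.ModEq at h3
  rw [Nat.mod_eq_of_lt (by omega), Nat.mod_eq_of_lt (by omega)] at h3
  omega

lemma chi_eq (p q r : ℕ) (hp : p.Prime) (hq : q.Prime) (hpq : p < q) (k : ℤ) (m : ℕ) :
    chi p q r k (m:ℤ) =
      (if ∃ j ∈ Finset.range p, ((m*r + q + j : ℕ) : ZMod (p*q)) = ((k : ℤ) : ZMod (p*q))
        then (1:ℤ) else 0)
      - (if ∃ j ∈ Finset.range p, ((m*r + j : ℕ) : ZMod (p*q)) = ((k : ℤ) : ZMod (p*q))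
        then (1:ℤ) else 0) := by
  have e1 : (∃ s : ℤ, (m:ℤ) * r + q < k + 1 + s * p * q ∧ k + 1 + s * p * q ≤ (m:ℤ) * r + q + p)
      ↔ ∃ j ∈ Finset.range p, ((m*r + q + j : ℕ) : ZMod (p*q)) = ((k : ℤ) : ZMod (p*q)) := by
    have h := cond_iff p q hp.pos hq.pos k (m*r + q)
    rw [show ((m*r+q : ℕ):ℤ) = (m:ℤ)*r+q by push_cast; ring] at h
    exact h
  have e2 : (∃ s : ℤ, (m:ℤ) * r < k + 1 + s * p * q ∧ k + 1 + s * p * q ≤ (m:ℤ) * r + p)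
      ↔ ∃ j ∈ Finset.range p, ((m*r + j : ℕ) : ZMod (p*q)) = ((k : ℤ) : ZMod (p*q)) := by
    have h := cond_iff p q hp.pos hq.pos k (m*r)
    rw [show ((m*r : ℕ):ℤ) = (m:ℤ)*r by push_cast; ring] at h
    exact h
  unfold chi
  simp only [e1, e2]
  split_ifs with h1 h2
  · exact absurd h2 (fun h2' => excl p q hp hq hpq k (m*r) h1 h2')
  · norm_num
  · norm_num
  · norm_num

end ZZaux

/-- Zhao–Zhang: for primes `p < q < r` and any integer `k`,
`Σ_{0 ≤ m ≤ φ(pq)} a_{pq}(m)·χ_k(m) = 0`. -/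
theorem stmt_9 (p q r : ℕ) (hp : p.Prime) (hq : q.Prime) (hr : r.Prime)
    (hpq : p < q) (hqr : q < r) (k : ℤ) :
    ∑ m ∈ Finset.range ((p * q).totient + 1),
      (cyclotomic (p * q) ℤ).coeff m * chi p q r k (m : ℤ) = 0 := by
  have hn0 : 0 < p * q := Nat.mul_pos hp.pos hq.pos
  haveI : NeZero (p * q) := ⟨hn0.ne'⟩
  set n := p * q with hn
  set κ : ZMod n := ((k : ℤ) : ZMod n) with hκ
  set y : AddMonoidAlgebra ℤ (ZMod n) := Eaux n r with hy
  set G : AddMonoidAlgebra ℤ (ZMod n) :=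
    (∑ j ∈ Finset.range p, Eaux n j) * (Eaux n q - 1) with hG
  -- the key algebraic vanishing
  have hF : (Polynomial.aeval y (cyclotomic n ℤ)) * G = 0 := key_alg p q r hp hq hr hpq hqr
  -- expand aeval as a sum
  have hexp : Polynomial.aeval y (cyclotomic n ℤ)
      = ∑ m ∈ Finset.range (n.totient + 1), (cyclotomic n ℤ).coeff m • y ^ m := by
    rw [← natDegree_cyclotomic n ℤ]
    exact aeval_eq_sum_range y
  have hF2 : ∑ m ∈ Finset.range (n.totient + 1),
      (cyclotomic n ℤ).coeff m • (y ^ m * G) = 0 := by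
    calc ∑ m ∈ Finset.range (n.totient + 1), (cyclotomic n ℤ).coeff m • (y ^ m * G)
        = (∑ m ∈ Finset.range (n.totient + 1), (cyclotomic n ℤ).coeff m • y ^ m) * G := by
          rw [Finset.sum_mul]
          exact Finset.sum_congr rfl fun m _ => (smul_mul_assoc _ _ _).symm
      _ = 0 := by rw [← hexp]; exact hF
  -- evaluate at κ
  have happ : ∑ m ∈ Finset.range (n.totient + 1),
      (cyclotomic n ℤ).coeff m * ((y ^ m * G).coeff κ) = 0 := by
    have h0 : ((∑ m ∈ Finset.range (n.totient + 1),
        (cyclotomic n ℤ).coeff m • (y ^ m * G) : AddMonoidAlgebra ℤ (ZMod n))).coeff κ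
          = ((0 : AddMonoidAlgebra ℤ (ZMod n))).coeff κ :=
      congrArg (fun f : AddMonoidAlgebra ℤ (ZMod n) => f.coeff κ) hF2
    rw [AddMonoidAlgebra.coeff_sum, Finsupp.finset_sum_apply, AddMonoidAlgebra.coeff_zero,
      Finsupp.zero_apply] at h0
    rw [← h0]
    apply Finset.sum_congr rfl
    intro m _
    rw [AddMonoidAlgebra.coeff_smul_apply, smul_eq_mul]
  -- identify the terms with χ
  rw [← happ]
  apply Finset.sum_congr rfl
  intro m _
  congr 1
  -- expand `y ^ m * G`
  have hterm : y ^ m * G = ∑ j ∈ Finset.range p,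
      (Eaux n (m*r + q + j) - Eaux n (m*r + j)) := by
    rw [hy, hG, Eaux_pow, Finset.sum_mul, Finset.mul_sum]
    apply Finset.sum_congr rfl
    intro j _
    rw [mul_sub, mul_sub, mul_one, Eaux_mul, Eaux_mul, Eaux_mul,
      show m*r + (j + q) = m*r + q + j from by ring]
  rw [hterm, chi_eq p q r hp hq hpq k m]
  have happly : (∑ j ∈ Finset.range p, (Eaux n (m*r + q + j) - Eaux n (m*r + j))).coeff κ
      = ∑ j ∈ Finset.range p,
        ((if ((m*r + q + j : ℕ) : ZMod n) = κ then (1:ℤ) else 0)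
          - (if ((m*r + j : ℕ) : ZMod n) = κ then (1:ℤ) else 0)) := by
    rw [AddMonoidAlgebra.coeff_sum, Finsupp.finset_sum_apply]
    apply Finset.sum_congr rfl
    intro j _
    rw [AddMonoidAlgebra.coeff_sub, Finsupp.sub_apply]
    congr 1 <;>
    · unfold Eaux
      rw [AddMonoidAlgebra.coeff_single_apply]
  rw [happly, Finset.sum_sub_distrib]
  have hpn : p ≤ n := by rw [hn]; nlinarith [hq.two_le]
  rw [sum_indicator_unique (Finset.range p)
      (fun j => ((m*r + q + j : ℕ) : ZMod n) = κ) (unique_j n p hpn (m*r+q) κ),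
    sum_indicator_unique (Finset.range p)
      (fun j => ((m*r + j : ℕ) : ZMod n) = κ) (unique_j n p hpn (m*r) κ)]
end

section
/- If v ≡ w (mod p), then [v] = [w], where for an integer v, [v] is the unique integer in [0, q-1] such that there exists s ∈ ℤ with ([v]p + vq)r + q < i + 1 + spq ≤ ([v]p + vq)r + p + q. -/
/-- Let `p < q < r` be primes and `i` a fixed integer. If `v ≡ w (mod p)` then
`[v] = [w]`, where `[v]` is the unique integer `uv ∈ [0, q-1]` such that
`([v] p + v q) r + q < i + 1 + s p q ≤ ([v] p + v q) r + p + q` for some `s ∈ ℤ`. -/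
theorem stmt_11 (p q r : ℕ) (hp : p.Prime) (hq : q.Prime) (hr : r.Prime)
    (hpq : p < q) (hqr : q < r) (i v w : ℤ)
    (hvw : v ≡ w [ZMOD p]) (uv uw : ℤ)
    (huv : 0 ≤ uv ∧ uv ≤ q - 1 ∧ ∃ s : ℤ,
      (uv * p + v * q) * r + q < i + 1 + s * p * q ∧
      i + 1 + s * p * q ≤ (uv * p + v * q) * r + p + q)
    (huw : 0 ≤ uw ∧ uw ≤ q - 1 ∧ ∃ s : ℤ,
      (uw * p + w * q) * r + q < i + 1 + s * p * q ∧
      i + 1 + s * p * q ≤ (uw * p + w * q) * r + p + q) :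
    uv = uw := by
  obtain ⟨hv0, hv1, s, hs1, hs2⟩ := huv
  obtain ⟨hw0, hw1, t, ht1, ht2⟩ := huw
  have hp0 : (0:ℤ) < p := by exact_mod_cast hp.pos
  have hq0 : (0:ℤ) < q := by exact_mod_cast hq.pos
  obtain ⟨k, hk⟩ : (p:ℤ) ∣ w - v := hvw.dvd
  have hw' : w = v + p * k := by linarith
  set d : ℤ := i + 1 + s*p*q - ((uv*p + v*q)*r + q) with hd
  set e : ℤ := i + 1 + t*p*q - ((uw*p + w*q)*r + q) with he
  have hfact : e - d = (p:ℤ) * (((uv-uw) - k*q)*r + (t - s)*q) := by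
    rw [hd, he, hw']; ring
  have hde : e - d = 0 := by
    apply Int.eq_zero_of_abs_lt_dvd ⟨_, hfact⟩
    rw [abs_lt]; constructor <;> linarith
  have hcancel : ((uv - uw) - k*q)*r = (s - t)*q := by
    have h1 : (p:ℤ) * (((uv-uw) - k*q)*r + (t - s)*q) = 0 := by
      rw [← hfact, hde]
    have h2 := (mul_eq_zero.mp h1).resolve_left (ne_of_gt hp0)
    linarith
  have hqr' : ¬ (q:ℤ) ∣ (r:ℤ) := by
    rw [Int.natCast_dvd_natCast]
    intro h
    have := (Nat.prime_dvd_prime_iff_eq hq hr).mp h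
    omega
  have hqdvd : (q:ℤ) ∣ (uv - uw) := by
    have h1 : (q:ℤ) ∣ ((uv - uw) - k*q)*r := ⟨s - t, by linarith [hcancel]⟩
    have h2 : (q:ℤ) ∣ ((uv - uw) - k*q) := by
      rcases (Int.Prime.dvd_mul' (by exact_mod_cast hq) h1) with h | h
      · exact h
      · exact absurd h hqr'
    obtain ⟨m, hm⟩ := h2
    exact ⟨m + k, by linarith⟩
  have : uv - uw = 0 := by
    apply Int.eq_zero_of_abs_lt_dvd hqdvd
    rw [abs_lt]; constructor <;> linarith
  linarith
end
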